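/- arXiv:1112.5515 — 5 statements merged into one kernel-verified Lean document; each statement's English description precedes it below -/
import Mathlib

section
/- For every real N > 0 there exists C_N > 0 with the following property: if A and B are bounded linear operators on ℓ²(ℤ) whose matrix entries a_{ij} = ⟪e_i, A e_j⟫ and b_{ij} = ⟪e_i, B e_j⟫ satisfy ‖A‖_{N+2} := sup_{i,j} |a_{ij}|·(1 + |i − j|)^(N+2) < ∞ and ‖B‖_{N+2} := sup_{i,j} |b_{ij}|·(1 + |i − j|)^(N+2) < ∞, then the matrix entries of the composition A∘B satisfy sup_{i,j} |⟪e_i, (A∘B) e_j⟫|·(1 + |i − j|)^N ≤ C_N·‖A‖_{N+2}·‖B‖_{N+2}. In particular, if A and B both have rapidly decaying matrix entries, then so does A∘B. -/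
noncomputable section

/-- `ℓ²(ℤ)`, the Hilbert space of square-summable complex sequences indexed by `ℤ`. -/
abbrev l2Z : Type := lp (fun _ : ℤ => ℂ) 2

/-- The standard orthonormal basis vector `e n` of `ℓ²(ℤ)`. -/
def e (n : ℤ) : l2Z := lp.single 2 n 1

/-- The matrix entry `a_{ij} = ⟪e_i, A e_j⟫` of a bounded operator on `ℓ²(ℤ)`. -/
def matrixEntry (A : l2Z →L[ℂ] l2Z) (i j : ℤ) : ℂ := @inner ℂ _ _ (e i) (A (e j))

def hb : HilbertBasis ℤ ℂ l2Z := HilbertBasis.ofRepr (LinearIsometryEquiv.refl ℂ l2Z)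

lemma hb_eq (n : ℤ) : hb n = e n := by
  have := HilbertBasis.repr_self hb n
  simpa [hb, e, HilbertBasis.ofRepr] using this

lemma entry_comp (A B : l2Z →L[ℂ] l2Z) (i j : ℤ) :
    matrixEntry (A ∘L B) i j = ∑' k, matrixEntry A i k * matrixEntry B k j := by
  calc matrixEntry (A ∘L B) i j
      = @inner ℂ _ _ (ContinuousLinearMap.adjoint A (e i)) (B (e j)) := by
        rw [ContinuousLinearMap.adjoint_inner_left]; rfl
    _ = ∑' k, @inner ℂ _ _ (ContinuousLinearMap.adjoint A (e i)) (hb k)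
          * @inner ℂ _ _ (hb k) (B (e j)) := (hb.tsum_inner_mul_inner _ _).symm
    _ = ∑' k, matrixEntry A i k * matrixEntry B k j := by
        refine tsum_congr fun k => ?_
        rw [hb_eq, ContinuousLinearMap.adjoint_inner_left]; rfl

lemma gsummable : Summable (fun m : ℤ => (1 + |(m : ℝ)|) ^ (-(2:ℝ))) := by
  have hnat : Summable (fun n : ℕ => (1 + (n : ℝ)) ^ (-(2:ℝ))) := by
    have h2 : Summable (fun n : ℕ => ((n : ℝ)) ^ (-(2:ℝ))) := by
      rw [Real.summable_nat_rpow]; norm_num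
    have := (summable_nat_add_iff (f := fun n : ℕ => ((n : ℝ)) ^ (-(2:ℝ))) 1).2 h2
    simpa [add_comm, Nat.cast_add] using this
  apply Summable.of_nat_of_neg
  · simpa using hnat
  · simpa using hnat

/-- for every `N > 0` there is `C_N > 0` such that whenever the matrix
entries of `A` and `B` satisfy `|a_{ij}| (1+|i-j|)^{N+2} ≤ K_A` and
`|b_{ij}| (1+|i-j|)^{N+2} ≤ K_B`, the matrix entries of the composition satisfy
`|(A∘B)_{ij}| (1+|i-j|)^N ≤ C_N K_A K_B`. -/
theorem composition_of_rapidly_decaying_matrices :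
    ∀ N : ℝ, 0 < N → ∃ C : ℝ, 0 < C ∧
      ∀ (A B : l2Z →L[ℂ] l2Z) (KA KB : ℝ),
        (∀ i j : ℤ, ‖matrixEntry A i j‖ * (1 + |((i - j : ℤ) : ℝ)|) ^ (N + 2) ≤ KA) →
        (∀ i j : ℤ, ‖matrixEntry B i j‖ * (1 + |((i - j : ℤ) : ℝ)|) ^ (N + 2) ≤ KB) →
        ∀ i j : ℤ, ‖matrixEntry (A ∘L B) i j‖ * (1 + |((i - j : ℤ) : ℝ)|) ^ N ≤
          C * KA * KB := by
  intro N hN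
  set C0 : ℝ := ∑' m : ℤ, (1 + |(m : ℝ)|) ^ (-(2:ℝ)) with hC0
  have hC0nn : 0 ≤ C0 := tsum_nonneg fun m => by positivity
  refine ⟨C0 + 1, by linarith, ?_⟩
  intro A B KA KB hA hB i j
  have hKA : 0 ≤ KA := le_trans (by positivity) (hA 0 0)
  have hKB : 0 ≤ KB := le_trans (by positivity) (hB 0 0)
  -- pointwise decay bounds
  have decay : ∀ (T : l2Z →L[ℂ] l2Z) (K : ℝ),
      (∀ i j : ℤ, ‖matrixEntry T i j‖ * (1 + |((i - j : ℤ) : ℝ)|) ^ (N + 2) ≤ K) →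
      ∀ i j : ℤ, ‖matrixEntry T i j‖ ≤ K * (1 + |((i - j : ℤ) : ℝ)|) ^ (-(N + 2)) := by
    intro T K hT a b
    have hd : (0:ℝ) < 1 + |((a - b : ℤ) : ℝ)| := by positivity
    rw [Real.rpow_neg hd.le, ← div_eq_mul_inv, le_div_iff₀ (by positivity)]
    exact hT a b
  have hAd := decay A KA hA
  have hBd := decay B KB hB
  set d : ℝ := 1 + |((i - j : ℤ) : ℝ)| with hd
  have hd1 : (1:ℝ) ≤ d := by simp [hd]
  -- dominating function
  set g : ℤ → ℝ := fun k => KA * KB *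
      ((1 + |((i - k : ℤ) : ℝ)|) ^ (-(2:ℝ)) * (1 + |((k - j : ℤ) : ℝ)|) ^ (-(2:ℝ))) with hg
  set G : ℤ → ℝ := fun k => KA * KB * (1 + |((i - k : ℤ) : ℝ)|) ^ (-(2:ℝ)) with hG
  have hgG : ∀ k, g k ≤ G k := by
    intro k
    have h2 : (1 + |((k - j : ℤ) : ℝ)|) ^ (-(2:ℝ)) ≤ 1 :=
      Real.rpow_le_one_of_one_le_of_nonpos (le_add_of_nonneg_right (abs_nonneg _)) (by norm_num)
    have h1 : (0:ℝ) ≤ (1 + |((i - k : ℤ) : ℝ)|) ^ (-(2:ℝ)) := by positivity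
    calc g k ≤ KA * KB * ((1 + |((i - k : ℤ) : ℝ)|) ^ (-(2:ℝ)) * 1) := by
          apply mul_le_mul_of_nonneg_left _ (mul_nonneg hKA hKB)
          exact mul_le_mul_of_nonneg_left h2 h1
      _ = G k := by rw [mul_one]
  have hGsum : Summable G := by
    have := (gsummable.comp_injective (Equiv.subLeft i).injective)
    exact (this.mul_left (KA * KB))
  have hgsum : Summable g := Summable.of_nonneg_of_le (fun k => mul_nonneg (mul_nonneg hKA hKB) (by positivity)) hgG hGsum
  -- per-k estimate
  have key : ∀ k : ℤ, ‖matrixEntry A i k * matrixEntry B k j‖ * d ^ N ≤ g k := by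
    intro k
    set d1 : ℝ := 1 + |((i - k : ℤ) : ℝ)| with hd1'
    set d2 : ℝ := 1 + |((k - j : ℤ) : ℝ)| with hd2'
    have hd1p : (0:ℝ) < d1 := by positivity
    have hd2p : (0:ℝ) < d2 := by positivity
    have htri : d ≤ d1 * d2 := by
      have : |((i - j : ℤ) : ℝ)| ≤ |((i - k : ℤ) : ℝ)| + |((k - j : ℤ) : ℝ)| := by
        push_cast
        exact abs_sub_le _ _ _
      have h1 : (0:ℝ) ≤ |((i - k : ℤ) : ℝ)| := abs_nonneg _
      have h2 : (0:ℝ) ≤ |((k - j : ℤ) : ℝ)| := abs_nonneg _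
      simp only [hd, hd1', hd2']
      nlinarith
    have hdN : d ^ N ≤ (d1 * d2) ^ N :=
      Real.rpow_le_rpow (by positivity) htri hN.le
    have hnorm : ‖matrixEntry A i k * matrixEntry B k j‖ ≤
        (KA * d1 ^ (-(N + 2))) * (KB * d2 ^ (-(N + 2))) := by
      rw [norm_mul]
      exact mul_le_mul (hAd i k) (hBd k j) (norm_nonneg _) (by positivity)
    calc ‖matrixEntry A i k * matrixEntry B k j‖ * d ^ N
        ≤ ((KA * d1 ^ (-(N + 2))) * (KB * d2 ^ (-(N + 2)))) * ((d1 * d2) ^ N) := by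
          exact mul_le_mul hnorm hdN (by positivity) (mul_nonneg (mul_nonneg hKA (by positivity)) (mul_nonneg hKB (by positivity)))
      _ = KA * KB * (d1 ^ (-(N + 2)) * d1 ^ N * (d2 ^ (-(N + 2)) * d2 ^ N)) := by
          rw [Real.mul_rpow hd1p.le hd2p.le]; ring
      _ = g k := by
          rw [← Real.rpow_add hd1p, ← Real.rpow_add hd2p]
          have : -(N + 2) + N = -(2:ℝ) := by ring
          rw [this]
  have hnormsum : Summable (fun k => ‖matrixEntry A i k * matrixEntry B k j‖) := by
    refine Summable.of_nonneg_of_le (fun k => norm_nonneg _) (fun k => ?_) hgsum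
    have hdN1 : (1:ℝ) ≤ d ^ N := Real.one_le_rpow hd1 hN.le
    calc ‖matrixEntry A i k * matrixEntry B k j‖
        = ‖matrixEntry A i k * matrixEntry B k j‖ * 1 := (mul_one _).symm
      _ ≤ ‖matrixEntry A i k * matrixEntry B k j‖ * d ^ N :=
          mul_le_mul_of_nonneg_left hdN1 (norm_nonneg _)
      _ ≤ g k := key k
  calc ‖matrixEntry (A ∘L B) i j‖ * d ^ N
      ≤ (∑' k, ‖matrixEntry A i k * matrixEntry B k j‖) * d ^ N := by
        apply mul_le_mul_of_nonneg_right _ (by positivity)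
        rw [entry_comp]
        exact norm_tsum_le_tsum_norm hnormsum
    _ = ∑' k, ‖matrixEntry A i k * matrixEntry B k j‖ * d ^ N := (tsum_mul_right).symm
    _ ≤ ∑' k, g k := Summable.tsum_le_tsum key (hnormsum.mul_right _) hgsum
    _ ≤ ∑' k, G k := Summable.tsum_le_tsum hgG hgsum hGsum
    _ = KA * KB * ∑' k, (1 + |((i - k : ℤ) : ℝ)|) ^ (-(2:ℝ)) := tsum_mul_left
    _ = KA * KB * C0 := by
        congr 1
        rw [hC0]
        exact ((Equiv.subLeft i).tsum_eq (fun m : ℤ => (1 + |(m : ℝ)|) ^ (-(2:ℝ)))).symm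
            ▸ rfl
    _ ≤ (C0 + 1) * KA * KB := by nlinarith
end
end

section
/- Let A be a bounded linear operator on ℓ²(ℤ) with rapidly decaying matrix entries. If A is invertible in the algebra of bounded linear operators on ℓ²(ℤ), then the inverse A⁻¹ also has rapidly decaying matrix entries. -/
noncomputable section

/-- `A` has rapidly decaying matrix entries: for every `N > 0` there is `C_N > 0` with
`|a_{ij}| ≤ C_N (1+|i-j|)^{-N}` for all `i, j`. -/
def RapidDecay (A : l2Z →L[ℂ] l2Z) : Prop :=
  ∀ N : ℝ, 0 < N → ∃ C : ℝ, 0 < C ∧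
    ∀ i j : ℤ, ‖matrixEntry A i j‖ ≤ C * (1 + |((i - j : ℤ) : ℝ)|) ^ (-N)

open scoped ENNReal ComplexConjugate
set_option maxHeartbeats 1000000
set_option synthInstance.maxHeartbeats 400000

local notation "⟪" x ", " y "⟫" => @inner ℂ _ _ x y

lemma two_toReal : ((2 : ℝ≥0∞).toReal) = (2:ℝ) := by norm_num

lemma shiftSummable (w : ℤ → ℝ) (hw : Summable w) (t : ℤ) :
    Summable (fun s : ℤ => w (s - t)) :=
  (Equiv.subRight t).summable_iff.2 hw

lemma shiftSum (w : ℤ → ℝ) (t : ℤ) : (∑' s : ℤ, w (s - t)) = ∑' d, w d :=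
  Equiv.tsum_eq (Equiv.subRight t) w

lemma shiftSummable' (w : ℤ → ℝ) (hw : Summable w) (s : ℤ) :
    Summable (fun t : ℤ => w (s - t)) :=
  (Equiv.subLeft s).summable_iff.2 hw

lemma shiftSum' (w : ℤ → ℝ) (s : ℤ) : (∑' t : ℤ, w (s - t)) = ∑' d, w d :=
  Equiv.tsum_eq (Equiv.subLeft s) w

lemma summable_norm_sq (x : l2Z) : Summable (fun k => ‖x k‖ ^ (2:ℕ)) := by
  have := ((lp.memℓp x).summable (p := 2) (by norm_num))
  rw [show ((2:ℝ≥0∞).toReal) = (2:ℝ) by norm_num] at this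
  refine this.congr fun k => ?_
  rw [show (2:ℝ) = ((2:ℕ):ℝ) by norm_num, Real.rpow_natCast]

lemma norm_sq_tsum (x : l2Z) : ‖x‖ ^ (2:ℕ) = ∑' k, ‖x k‖ ^ (2:ℕ) := by
  have h := lp.norm_rpow_eq_tsum (p := 2) (by norm_num) x
  rw [show ((2:ℝ≥0∞).toReal) = (2:ℝ) by norm_num] at h
  have h2 : ∀ a : ℝ, a ^ (2:ℝ) = a ^ (2:ℕ) := fun a => by
    rw [show (2:ℝ) = ((2:ℕ):ℝ) by norm_num, Real.rpow_natCast]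
  rw [h2] at h; simp_rw [h2] at h; exact h

lemma inner_e_left (n : ℤ) (x : l2Z) : ⟪e n, x⟫ = x n := by
  simp [e, lp.inner_single_left]

lemma entry_eq (T : l2Z →L[ℂ] l2Z) (s t : ℤ) : (T (e t)) s = matrixEntry T s t :=
  (inner_e_left s (T (e t))).symm

-- kernel G over p = (t,s)
lemma memdiag (c : ℤ → ℂ) (M : ℝ) (hc : ∀ k, ‖c k‖ ≤ M) (x : l2Z) :
    Memℓp (fun k => c k * x k) 2 := by
  apply memℓp_gen
  rw [two_toReal]
  have hbase : Summable (fun k => M ^ (2:ℕ) * ‖x k‖ ^ (2:ℕ)) :=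
    (summable_norm_sq x).mul_left _
  have key : Summable (fun k => ‖c k * x k‖ ^ (2:ℕ)) := by
    refine Summable.of_nonneg_of_le (fun k => by positivity) (fun k => ?_) hbase
    rw [← mul_pow]
    apply pow_le_pow_left₀ (norm_nonneg _)
    rw [norm_mul]
    exact mul_le_mul_of_nonneg_right (hc k) (norm_nonneg _)
  refine key.congr fun k => ?_
  rw [show (2:ℝ) = ((2:ℕ):ℝ) by norm_num, Real.rpow_natCast]

def diag (c : ℤ → ℂ) (M : ℝ) (hc : ∀ k, ‖c k‖ ≤ M) : l2Z →L[ℂ] l2Z :=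
  LinearMap.mkContinuous
    { toFun := fun x => (⟨fun k => c k * x k, memdiag c M hc x⟩ : l2Z)
      map_add' := by
        intro x y
        apply Subtype.ext
        funext k
        simp only [lp.coeFn_add, Pi.add_apply]
        show c k * (x + y) k = c k * x k + c k * y k
        rw [lp.coeFn_add]
        show c k * (x k + y k) = _
        ring
      map_smul' := by
        intro a x
        apply Subtype.ext
        funext k
        show c k * (a • x) k = (a • (⟨fun k => c k * x k, memdiag c M hc x⟩ : l2Z)) k
        rw [lp.coeFn_smul, lp.coeFn_smul]
        show c k * (a * x k) = a * (c k * x k)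
        ring }
    M
    (by
      intro x
      have hM : 0 ≤ M := le_trans (norm_nonneg _) (hc 0)
      have hx : 0 ≤ ‖x‖ := norm_nonneg _
      have key : ‖(⟨fun k => c k * x k, memdiag c M hc x⟩ : l2Z)‖ ^ (2:ℕ) ≤ (M * ‖x‖) ^ (2:ℕ) := by
        rw [norm_sq_tsum]
        have h1 : ∑' k, ‖(⟨fun k => c k * x k, memdiag c M hc x⟩ : l2Z) k‖ ^ (2:ℕ)
            ≤ ∑' k, M ^ (2:ℕ) * ‖x k‖ ^ (2:ℕ) := by
          refine Summable.tsum_le_tsum (fun k => ?_) ?_ ((summable_norm_sq x).mul_left _)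
          · show ‖c k * x k‖ ^ (2:ℕ) ≤ _
            rw [← mul_pow]
            apply pow_le_pow_left₀ (norm_nonneg _)
            rw [norm_mul]
            exact mul_le_mul_of_nonneg_right (hc k) (norm_nonneg _)
          · refine Summable.of_nonneg_of_le (fun k => by positivity) (fun k => ?_)
              ((summable_norm_sq x).mul_left (M ^ (2:ℕ)))
            show ‖c k * x k‖ ^ (2:ℕ) ≤ _
            rw [← mul_pow]
            apply pow_le_pow_left₀ (norm_nonneg _)
            rw [norm_mul]
            exact mul_le_mul_of_nonneg_right (hc k) (norm_nonneg _)
        calc _ ≤ ∑' k, M ^ (2:ℕ) * ‖x k‖ ^ (2:ℕ) := h1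
          _ = M ^ (2:ℕ) * ∑' k, ‖x k‖ ^ (2:ℕ) := tsum_mul_left
          _ = (M * ‖x‖) ^ (2:ℕ) := by rw [← norm_sq_tsum x]; ring
      have := (pow_le_pow_iff_left₀ (norm_nonneg _) (by positivity) (by norm_num)).1 key
      exact this)

lemma diag_apply (c : ℤ → ℂ) (M : ℝ) (hc : ∀ k, ‖c k‖ ≤ M) (x : l2Z) (k : ℤ) :
    (diag c M hc x) k = c k * x k := rfl

lemma Gsummable (w : ℤ → ℝ) (hw0 : ∀ d, 0 ≤ w d) (hw : Summable w) (y : l2Z) :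
    Summable (fun p : ℤ × ℤ => w (p.2 - p.1) * ‖y p.1‖^(2:ℕ)) := by
  refine (summable_prod_of_nonneg ?_).2 ⟨?_, ?_⟩
  · intro p; exact mul_nonneg (hw0 _) (by positivity)
  · intro t; dsimp only
    exact (shiftSummable w hw t).mul_right _
  · dsimp only
    have h3 : Summable (fun t => (∑' d, w d) * ‖y t‖^(2:ℕ)) := (summable_norm_sq y).mul_left _
    refine h3.congr fun t => ?_
    rw [tsum_mul_right, shiftSum]

lemma Gsum (w : ℤ → ℝ) (hw0 : ∀ d, 0 ≤ w d) (hw : Summable w) (y : l2Z) :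
    ∑' p : ℤ × ℤ, w (p.2 - p.1) * ‖y p.1‖^(2:ℕ) = (∑' d, w d) * ‖y‖^(2:ℕ) := by
  rw [Summable.tsum_prod (Gsummable w hw0 hw y)]
  dsimp only
  have h1 : ∀ t : ℤ, (∑' s : ℤ, w (s - t) * ‖y t‖^(2:ℕ)) = (∑' d, w d) * ‖y t‖^(2:ℕ) := by
    intro t; rw [tsum_mul_right, shiftSum]
  rw [tsum_congr h1, tsum_mul_left, ← norm_sq_tsum]

-- kernel H over q = (s,t)
lemma Hsummable (w : ℤ → ℝ) (hw0 : ∀ d, 0 ≤ w d) (hw : Summable w) (x : l2Z) :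
    Summable (fun q : ℤ × ℤ => w (q.1 - q.2) * ‖x q.1‖^(2:ℕ)) := by
  refine (summable_prod_of_nonneg ?_).2 ⟨?_, ?_⟩
  · intro p; exact mul_nonneg (hw0 _) (by positivity)
  · intro s; dsimp only
    exact (shiftSummable' w hw s).mul_right _
  · dsimp only
    have h3 : Summable (fun s => (∑' d, w d) * ‖x s‖^(2:ℕ)) := (summable_norm_sq x).mul_left _
    refine h3.congr fun s => ?_
    rw [tsum_mul_right, shiftSum']

lemma Hsum (w : ℤ → ℝ) (hw0 : ∀ d, 0 ≤ w d) (hw : Summable w) (x : l2Z) :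
    ∑' q : ℤ × ℤ, w (q.1 - q.2) * ‖x q.1‖^(2:ℕ) = (∑' d, w d) * ‖x‖^(2:ℕ) := by
  rw [Summable.tsum_prod (Hsummable w hw0 hw x)]
  dsimp only
  have h1 : ∀ s : ℤ, (∑' t : ℤ, w (s - t) * ‖x s‖^(2:ℕ)) = (∑' d, w d) * ‖x s‖^(2:ℕ) := by
    intro s; rw [tsum_mul_right, shiftSum']
  rw [tsum_congr h1, tsum_mul_left, ← norm_sq_tsum]

lemma inner_expansion (T : l2Z →L[ℂ] l2Z) (x y : l2Z) :
    HasSum (fun t => y t * ⟪x, T (e t)⟫) ⟪x, T y⟫ := by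
  have h0 : HasSum (fun t : ℤ => lp.single 2 t (y t)) y :=
    lp.hasSum_single (by norm_num) y
  have h1 := ((innerSL ℂ x).comp T).hasSum h0
  have h2 : (fun t => ((innerSL ℂ x).comp T) (lp.single 2 t (y t)))
      = fun t => y t * ⟪x, T (e t)⟫ := by
    funext t
    have hs : lp.single 2 t (y t) = y t • e t := by
      rw [e, ← lp.single_smul]
      congr 1
      simp [smul_eq_mul]
    rw [ContinuousLinearMap.comp_apply, hs, map_smul]
    simp [innerSL_apply_apply, inner_smul_right, smul_eq_mul]
  rw [h2] at h1
  exact h1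

lemma inner_col_bound (T : l2Z →L[ℂ] l2Z) (w : ℤ → ℝ) (hw0 : ∀ d, 0 ≤ w d) (hw : Summable w)
    (hT : ∀ i j, ‖matrixEntry T i j‖ ≤ w (i - j)) (x : l2Z) (t : ℤ) :
    ‖⟪x, T (e t)⟫‖ ≤ ∑' s, ‖x s‖ * w (s - t) := by
  have hxB : ∀ s, ‖x s‖ ≤ ‖x‖ := fun s => lp.norm_apply_le_norm (by norm_num) x s
  have hdom : Summable (fun s : ℤ => ‖x s‖ * w (s - t)) := by
    refine Summable.of_nonneg_of_le (fun s => mul_nonneg (norm_nonneg _) (hw0 _))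
      (fun s => ?_) ((shiftSummable w hw t).mul_left ‖x‖)
    exact mul_le_mul_of_nonneg_right (hxB s) (hw0 _)
  have hterm : ∀ s : ℤ, ‖(starRingEnd ℂ) (x s) * (T (e t)) s‖ ≤ ‖x s‖ * w (s - t) := by
    intro s
    rw [norm_mul, RCLike.norm_conj]
    refine mul_le_mul_of_nonneg_left ?_ (norm_nonneg _)
    rw [entry_eq]
    exact hT s t
  have hsn : Summable (fun s : ℤ => ‖(starRingEnd ℂ) (x s) * (T (e t)) s‖) :=
    Summable.of_nonneg_of_le (fun s => norm_nonneg _) hterm hdom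
  have hin : ⟪x, T (e t)⟫ = ∑' s, (starRingEnd ℂ) (x s) * (T (e t)) s := by
    rw [lp.inner_eq_tsum]
    congr 1; funext s; simp only [RCLike.inner_apply]; ring
  rw [hin]
  calc ‖∑' s, (starRingEnd ℂ) (x s) * (T (e t)) s‖
      ≤ ∑' s, ‖(starRingEnd ℂ) (x s) * (T (e t)) s‖ := norm_tsum_le_tsum_norm hsn
    _ ≤ ∑' s, ‖x s‖ * w (s - t) := Summable.tsum_le_tsum hterm hsn hdom

lemma master (T : l2Z →L[ℂ] l2Z) (w : ℤ → ℝ) (hw0 : ∀ d, 0 ≤ w d) (hw : Summable w)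
    (hT : ∀ i j, ‖matrixEntry T i j‖ ≤ w (i - j)) (x y : l2Z) :
    ‖⟪x, T y⟫‖ ≤ (∑' d, w d) / 2 * (‖x‖^(2:ℕ) + ‖y‖^(2:ℕ)) := by
  set S : ℝ := ∑' d, w d with hS
  have hF0 : ∀ p : ℤ × ℤ, 0 ≤ ‖y p.1‖ * (‖x p.2‖ * w (p.2 - p.1)) :=
    fun p => mul_nonneg (norm_nonneg _) (mul_nonneg (norm_nonneg _) (hw0 _))
  have hHswap : Summable (fun p : ℤ × ℤ => w (p.2 - p.1) * ‖x p.2‖^(2:ℕ)) := by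
    have h := (Hsummable w hw0 hw x).prod_symm
    exact h.congr fun p => rfl
  have hHswapSum : ∑' p : ℤ × ℤ, w (p.2 - p.1) * ‖x p.2‖^(2:ℕ) = S * ‖x‖^(2:ℕ) := by
    rw [← Hsum w hw0 hw x]
    have := Equiv.tsum_eq (Equiv.prodComm ℤ ℤ)
      (fun q : ℤ × ℤ => w (q.1 - q.2) * ‖x q.1‖^(2:ℕ))
    rw [← this]
    rfl
  have hKsummable : Summable (fun p : ℤ × ℤ =>
      (w (p.2 - p.1) * ‖y p.1‖^(2:ℕ) + w (p.2 - p.1) * ‖x p.2‖^(2:ℕ)) / 2) :=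
    ((Gsummable w hw0 hw y).add hHswap).div_const 2
  have hFle : ∀ p : ℤ × ℤ, ‖y p.1‖ * (‖x p.2‖ * w (p.2 - p.1)) ≤
      (w (p.2 - p.1) * ‖y p.1‖^(2:ℕ) + w (p.2 - p.1) * ‖x p.2‖^(2:ℕ)) / 2 := by
    intro p
    have h2 := two_mul_le_add_sq (‖y p.1‖) (‖x p.2‖)
    have hwp := hw0 (p.2 - p.1)
    nlinarith [norm_nonneg (y p.1), norm_nonneg (x p.2),
      mul_le_mul_of_nonneg_left h2 hwp]
  have hFsummable : Summable (fun p : ℤ × ℤ => ‖y p.1‖ * (‖x p.2‖ * w (p.2 - p.1))) :=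
    Summable.of_nonneg_of_le hF0 hFle hKsummable
  have hFtsum : ∑' p : ℤ × ℤ, ‖y p.1‖ * (‖x p.2‖ * w (p.2 - p.1)) ≤
      S / 2 * (‖x‖^(2:ℕ) + ‖y‖^(2:ℕ)) := by
    calc ∑' p : ℤ × ℤ, ‖y p.1‖ * (‖x p.2‖ * w (p.2 - p.1))
        ≤ ∑' p : ℤ × ℤ, (w (p.2 - p.1) * ‖y p.1‖^(2:ℕ) + w (p.2 - p.1) * ‖x p.2‖^(2:ℕ)) / 2 :=
          Summable.tsum_le_tsum hFle hFsummable hKsummable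
      _ = (∑' p : ℤ × ℤ, (w (p.2 - p.1) * ‖y p.1‖^(2:ℕ) + w (p.2 - p.1) * ‖x p.2‖^(2:ℕ))) / 2 :=
          tsum_div_const
      _ = ((∑' p : ℤ × ℤ, w (p.2 - p.1) * ‖y p.1‖^(2:ℕ)) +
            ∑' p : ℤ × ℤ, w (p.2 - p.1) * ‖x p.2‖^(2:ℕ)) / 2 := by
          rw [Summable.tsum_add (Gsummable w hw0 hw y) hHswap]
      _ = (S * ‖y‖^(2:ℕ) + S * ‖x‖^(2:ℕ)) / 2 := by
          rw [Gsum w hw0 hw y, hHswapSum]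
      _ = S / 2 * (‖x‖^(2:ℕ) + ‖y‖^(2:ℕ)) := by ring
  -- marginal summability
  have hmarg : Summable (fun t => ∑' s : ℤ, ‖y t‖ * (‖x s‖ * w (s - t))) := by
    have := ((summable_prod_of_nonneg hF0).1 hFsummable).2
    exact this.congr fun t => rfl
  have hpt : ∀ t : ℤ, ‖y t * ⟪x, T (e t)⟫‖ ≤ ∑' s : ℤ, ‖y t‖ * (‖x s‖ * w (s - t)) := by
    intro t
    rw [norm_mul, tsum_mul_left]
    exact mul_le_mul_of_nonneg_left (inner_col_bound T w hw0 hw hT x t) (norm_nonneg _)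
  have hnorm : Summable (fun t => ‖y t * ⟪x, T (e t)⟫‖) :=
    Summable.of_nonneg_of_le (fun t => norm_nonneg _) hpt hmarg
  calc ‖⟪x, T y⟫‖ = ‖∑' t, y t * ⟪x, T (e t)⟫‖ := by
        rw [(inner_expansion T x y).tsum_eq]
    _ ≤ ∑' t, ‖y t * ⟪x, T (e t)⟫‖ := norm_tsum_le_tsum_norm hnorm
    _ ≤ ∑' t, ∑' s : ℤ, ‖y t‖ * (‖x s‖ * w (s - t)) := Summable.tsum_le_tsum hpt hnorm hmarg
    _ = ∑' p : ℤ × ℤ, ‖y p.1‖ * (‖x p.2‖ * w (p.2 - p.1)) := (Summable.tsum_prod hFsummable).symm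
    _ ≤ S / 2 * (‖x‖^(2:ℕ) + ‖y‖^(2:ℕ)) := hFtsum

lemma inner_bound (T : l2Z →L[ℂ] l2Z) (w : ℤ → ℝ) (hw0 : ∀ d, 0 ≤ w d) (hw : Summable w)
    (hT : ∀ i j, ‖matrixEntry T i j‖ ≤ w (i - j)) (x y : l2Z) :
    ‖⟪x, T y⟫‖ ≤ (∑' d, w d) * ‖x‖ * ‖y‖ := by
  set S : ℝ := ∑' d, w d with hS
  have hS0 : 0 ≤ S := tsum_nonneg hw0
  by_cases hx : x = 0
  · simp [hx]
  by_cases hy : y = 0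
  · simp [hy]
  have hxn : 0 < ‖x‖ := norm_pos_iff.2 hx
  have hyn : 0 < ‖y‖ := norm_pos_iff.2 hy
  set c : ℝ := Real.sqrt (‖y‖ / ‖x‖) with hc
  have hc0 : 0 < c := Real.sqrt_pos.2 (by positivity)
  have hcsq : c^(2:ℕ) = ‖y‖ / ‖x‖ := Real.sq_sqrt (by positivity)
  have key := master T w hw0 hw hT ((c:ℂ) • x) (((c:ℝ)⁻¹:ℂ) • y)
  have hinner : ⟪((c:ℂ) • x), T ((((c:ℝ)⁻¹:ℂ)) • y)⟫ = ⟪x, T y⟫ := by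
    rw [map_smul, inner_smul_left, inner_smul_right]
    rw [Complex.conj_ofReal]
    rw [← mul_assoc]
    norm_cast
    rw [mul_inv_cancel₀ (ne_of_gt hc0)]
    simp
  rw [hinner] at key
  have hnx : ‖(c:ℂ) • x‖ = c * ‖x‖ := by
    rw [norm_smul, Complex.norm_real, Real.norm_eq_abs, abs_of_pos hc0]
  have hny : ‖(((c:ℝ)⁻¹:ℂ)) • y‖ = c⁻¹ * ‖y‖ := by
    rw [norm_smul, norm_inv, Complex.norm_real, Real.norm_eq_abs, abs_of_pos hc0]
  rw [hnx, hny] at key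
  have hcalc : S / 2 * ((c * ‖x‖)^(2:ℕ) + (c⁻¹ * ‖y‖)^(2:ℕ)) = S * ‖x‖ * ‖y‖ := by
    have h1 : (c * ‖x‖)^(2:ℕ) = (‖y‖/‖x‖) * ‖x‖^(2:ℕ) := by rw [mul_pow, hcsq]
    have h2 : (c⁻¹ * ‖y‖)^(2:ℕ) = (‖x‖/‖y‖) * ‖y‖^(2:ℕ) := by
      rw [mul_pow, inv_pow, hcsq]
      field_simp
    rw [h1, h2]
    field_simp
    ring
  rw [hcalc] at key
  exact key

lemma schur (T : l2Z →L[ℂ] l2Z) (w : ℤ → ℝ) (hw0 : ∀ d, 0 ≤ w d) (hw : Summable w)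
    (hT : ∀ i j, ‖matrixEntry T i j‖ ≤ w (i - j)) : ‖T‖ ≤ ∑' d, w d := by
  set S : ℝ := ∑' d, w d with hS
  have hS0 : 0 ≤ S := tsum_nonneg hw0
  refine T.opNorm_le_bound hS0 fun y => ?_
  have key := inner_bound T w hw0 hw hT (T y) y
  have hself : ‖(⟪T y, T y⟫ : ℂ)‖ = ‖T y‖^(2:ℕ) := by
    rw [inner_self_eq_norm_sq_to_K]
    rw [norm_pow]
    norm_num
  rw [hself] at key
  by_cases h0 : ‖T y‖ = 0
  · rw [h0]; positivity
  have hpos : 0 < ‖T y‖ := lt_of_le_of_ne (norm_nonneg _) (Ne.symm h0)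
  have : ‖T y‖^(2:ℕ) = ‖T y‖ * ‖T y‖ := sq (‖T y‖) ▸ by ring
  nlinarith

lemma e_norm (n : ℤ) : ‖e n‖ = 1 := by
  have h : (0:ℝ) < (2 : ℝ≥0∞).toReal := by norm_num
  rw [e, lp.norm_single (E := fun _ : ℤ => ℂ) (p := 2) (by norm_num) n (1:ℂ)]
  simp

lemma entry_norm_le (T : l2Z →L[ℂ] l2Z) (i j : ℤ) : ‖matrixEntry T i j‖ ≤ ‖T‖ := by
  have h := norm_inner_le_norm (𝕜 := ℂ) (e i) (T (e j))
  calc ‖matrixEntry T i j‖ ≤ ‖e i‖ * ‖T (e j)‖ := h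
    _ ≤ 1 * (‖T‖ * ‖e j‖) := by
        rw [e_norm]
        simpa using T.le_opNorm (e j)
    _ = ‖T‖ := by rw [e_norm]; ring

def phi (n : ℕ) (k : ℤ) : ℤ := max (-(n:ℤ)) (min (n:ℤ) k)

lemma phi_abs_le (n : ℕ) (k : ℤ) : |phi n k| ≤ (n:ℤ) := by
  rw [abs_le, phi]
  constructor
  · exact le_max_left _ _
  · apply max_le
    · omega
    · exact min_le_left _ _

lemma phi_lip (n : ℕ) (i j : ℤ) : |phi n i - phi n j| ≤ |i - j| := by
  rw [phi, phi]
  calc |max (-(n:ℤ)) (min (n:ℤ) i) - max (-(n:ℤ)) (min (n:ℤ) j)|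
      ≤ |min (n:ℤ) i - min (n:ℤ) j| := by
        rw [max_comm (-(n:ℤ)) _, max_comm (-(n:ℤ)) _]
        exact abs_max_sub_max_le_abs _ _ _
    _ ≤ |i - j| := by
        have h := abs_min_sub_min_le_max (n:ℤ) i (n:ℤ) j
        simpa using h

lemma phi_eq (n : ℕ) (k : ℤ) (h : |k| ≤ (n:ℤ)) : phi n k = k := by
  rw [phi]
  rw [abs_le] at h
  rw [min_eq_right h.2, max_eq_right h.1]

lemma phi_norm_le (n : ℕ) (k : ℤ) : ‖((phi n k : ℤ) : ℂ)‖ ≤ (n:ℝ) := by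
  rw [Complex.norm_intCast]
  have := phi_abs_le n k
  calc |((phi n k : ℤ) : ℝ)| = ((|phi n k| : ℤ) : ℝ) := by
        rw [Int.cast_abs]
    _ ≤ ((n:ℤ):ℝ) := by exact_mod_cast this
    _ = (n:ℝ) := by norm_cast

def Dop (n : ℕ) : l2Z →L[ℂ] l2Z := diag (fun k => ((phi n k : ℤ) : ℂ)) n (phi_norm_le n)

lemma Dop_e (n : ℕ) (j : ℤ) : Dop n (e j) = ((phi n j : ℤ) : ℂ) • e j := by
  apply Subtype.ext
  funext k
  rw [Dop]
  show (diag _ _ _ (e j)) k = _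
  rw [diag_apply]
  rw [lp.coeFn_smul]
  show ((phi n k : ℤ) : ℂ) * (e j) k = ((phi n j : ℤ) : ℂ) * (e j) k
  by_cases h : k = j
  · subst h; rfl
  · have : (e j) k = 0 := by
      show (lp.single 2 j (1:ℂ) : l2Z) k = 0
      rw [lp.single_apply]
      simp [h]
    rw [this, mul_zero, mul_zero]

lemma inner_e_Dop (n : ℕ) (i : ℤ) (z : l2Z) :
    ⟪e i, Dop n z⟫ = ((phi n i : ℤ) : ℂ) * ⟪e i, z⟫ := by
  rw [inner_e_left, inner_e_left, Dop]
  exact diag_apply _ _ _ z i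

def cmt (n : ℕ) (X : l2Z →L[ℂ] l2Z) : l2Z →L[ℂ] l2Z := Dop n * X - X * Dop n

def itcmt (n : ℕ) : ℕ → (l2Z →L[ℂ] l2Z) → (l2Z →L[ℂ] l2Z)
  | 0, X => X
  | (k+1), X => cmt n (itcmt n k X)

lemma cmt_add (n : ℕ) (X Y : l2Z →L[ℂ] l2Z) : cmt n (X + Y) = cmt n X + cmt n Y := by
  simp only [cmt]; noncomm_ring

lemma cmt_neg (n : ℕ) (X : l2Z →L[ℂ] l2Z) : cmt n (-X) = -cmt n X := by
  simp only [cmt]; noncomm_ring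

lemma itcmt_add (n : ℕ) (k : ℕ) (X Y : l2Z →L[ℂ] l2Z) :
    itcmt n k (X + Y) = itcmt n k X + itcmt n k Y := by
  induction k with
  | zero => rfl
  | succ k ih => show cmt n (itcmt n k (X + Y)) = _; rw [ih, cmt_add]; rfl

lemma itcmt_neg (n : ℕ) (k : ℕ) (X : l2Z →L[ℂ] l2Z) :
    itcmt n k (-X) = -itcmt n k X := by
  induction k with
  | zero => rfl
  | succ k ih => show cmt n (itcmt n k (-X)) = _; rw [ih, cmt_neg]; rfl

lemma itcmt_succ' (n : ℕ) (k : ℕ) (X : l2Z →L[ℂ] l2Z) :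
    itcmt n (k+1) X = itcmt n k (cmt n X) := by
  induction k with
  | zero => rfl
  | succ k ih =>
      show cmt n (itcmt n (k+1) X) = cmt n (itcmt n k (cmt n X))
      rw [ih]

lemma cmt_leibniz (n : ℕ) (X Y : l2Z →L[ℂ] l2Z) :
    cmt n (X * Y) = cmt n X * Y + X * cmt n Y := by
  simp only [cmt]; noncomm_ring

lemma cmt_entry (n : ℕ) (X : l2Z →L[ℂ] l2Z) (i j : ℤ) :
    matrixEntry (cmt n X) i j
      = (((phi n i : ℤ) : ℂ) - ((phi n j : ℤ) : ℂ)) * matrixEntry X i j := by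
  rw [matrixEntry, cmt]
  have happ : (Dop n * X - X * Dop n) (e j) = Dop n (X (e j)) - X (Dop n (e j)) := rfl
  rw [happ, inner_sub_right, inner_e_Dop, Dop_e, map_smul, inner_smul_right]
  rw [matrixEntry]
  ring

lemma itcmt_entry (n : ℕ) (k : ℕ) (X : l2Z →L[ℂ] l2Z) (i j : ℤ) :
    matrixEntry (itcmt n k X) i j
      = (((phi n i : ℤ) : ℂ) - ((phi n j : ℤ) : ℂ))^k * matrixEntry X i j := by
  induction k with
  | zero => simp [itcmt]
  | succ k ih =>
      show matrixEntry (cmt n (itcmt n k X)) i j = _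
      rw [cmt_entry, ih, pow_succ]
      ring

lemma summable_base : Summable (fun d : ℤ => ((1 + |(d:ℝ)|) ^ (2:ℕ))⁻¹) := by
  have h0 : Summable (fun n : ℕ => (((n:ℝ)+1) ^ 2)⁻¹) := by
    have := (summable_nat_add_iff (f := fun n : ℕ => ((n:ℝ)^2)⁻¹) 1).2
      (Real.summable_nat_pow_inv.2 one_lt_two)
    exact this.congr (by intro n; push_cast; ring_nf)
  apply Summable.of_nat_of_neg
  · exact h0.congr (by intro n; norm_num [abs_of_nonneg, add_comm])
  · refine h0.congr ?_
    intro n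
    simp [abs_of_nonneg, add_comm]

lemma summable_w (C : ℝ) : Summable (fun d : ℤ => C * ((1 + |(d:ℝ)|) ^ (2:ℕ))⁻¹) :=
  summable_base.mul_left C

def UB (k : ℕ) (X : ℕ → (l2Z →L[ℂ] l2Z)) : Prop :=
  ∃ M : ℝ, ∀ n, ‖itcmt n k (X n)‖ ≤ M

lemma UB_nonneg {k : ℕ} {X : ℕ → (l2Z →L[ℂ] l2Z)} (h : UB k X) :
    ∃ M : ℝ, 0 ≤ M ∧ ∀ n, ‖itcmt n k (X n)‖ ≤ M := by
  obtain ⟨M, hM⟩ := h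
  exact ⟨M, le_trans (norm_nonneg _) (hM 0), hM⟩

lemma Qmul : ∀ k : ℕ, ∀ X Y : ℕ → (l2Z →L[ℂ] l2Z),
    (∀ j ≤ k, UB j X) → (∀ j ≤ k, UB j Y) → UB k (fun n => X n * Y n) := by
  intro k
  induction k with
  | zero =>
      intro X Y hX hY
      obtain ⟨Mx, hMx0, hMx⟩ := UB_nonneg (hX 0 le_rfl)
      obtain ⟨My, hMy0, hMy⟩ := UB_nonneg (hY 0 le_rfl)
      refine ⟨Mx * My, fun n => ?_⟩
      show ‖X n * Y n‖ ≤ Mx * My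
      calc ‖X n * Y n‖ ≤ ‖X n‖ * ‖Y n‖ := norm_mul_le _ _
        _ ≤ Mx * My := mul_le_mul (hMx n) (hMy n) (norm_nonneg _) hMx0
  | succ k ih =>
      intro X Y hX hY
      have hX' : ∀ j ≤ k, UB j (fun n => cmt n (X n)) := by
        intro j hj
        obtain ⟨M, hM⟩ := hX (j+1) (by omega)
        exact ⟨M, fun n => by
          have := hM n
          rwa [itcmt_succ'] at this⟩
      have hY' : ∀ j ≤ k, UB j (fun n => cmt n (Y n)) := by
        intro j hj
        obtain ⟨M, hM⟩ := hY (j+1) (by omega)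
        exact ⟨M, fun n => by
          have := hM n
          rwa [itcmt_succ'] at this⟩
      have hXk : ∀ j ≤ k, UB j X := fun j hj => hX j (by omega)
      have hYk : ∀ j ≤ k, UB j Y := fun j hj => hY j (by omega)
      obtain ⟨M1, hM1⟩ := ih (fun n => cmt n (X n)) Y hX' hYk
      obtain ⟨M2, hM2⟩ := ih X (fun n => cmt n (Y n)) hXk hY'
      refine ⟨M1 + M2, fun n => ?_⟩
      have hrw : itcmt n (k+1) (X n * Y n)
          = itcmt n k (cmt n (X n) * Y n) + itcmt n k (X n * cmt n (Y n)) := by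
        rw [itcmt_succ', cmt_leibniz, itcmt_add]
      rw [hrw]
      calc ‖_ + _‖ ≤ ‖itcmt n k (cmt n (X n) * Y n)‖ + ‖itcmt n k (X n * cmt n (Y n))‖ :=
            norm_add_le _ _
        _ ≤ M1 + M2 := add_le_add (hM1 n) (hM2 n)

lemma PA (A : l2Z →L[ℂ] l2Z) (hA : RapidDecay A) (k : ℕ) : UB k (fun _ => A) := by
  obtain ⟨C, hC0, hC⟩ := hA ((k:ℝ) + 2) (by positivity)
  set w : ℤ → ℝ := fun d => C * ((1 + |(d:ℝ)|) ^ (2:ℕ))⁻¹ with hw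
  have hw0 : ∀ d, 0 ≤ w d := fun d => by
    have : (0:ℝ) < 1 + |(d:ℝ)| := by positivity
    positivity
  refine ⟨∑' d, w d, fun n => ?_⟩
  apply schur _ w hw0 (summable_w C)
  intro i j
  rw [itcmt_entry]
  set t : ℝ := |((i - j : ℤ) : ℝ)| with ht
  have ht0 : 0 ≤ t := abs_nonneg _
  have h1t : (0:ℝ) < 1 + t := by positivity
  have hphi : ‖(((phi n i : ℤ) : ℂ) - ((phi n j : ℤ) : ℂ))‖ ≤ t := by
    have : (((phi n i : ℤ) : ℂ) - ((phi n j : ℤ) : ℂ)) = (((phi n i - phi n j : ℤ) : ℤ) : ℂ) := by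
      push_cast; ring
    rw [this, Complex.norm_intCast]
    have h2 := phi_lip n i j
    calc |((phi n i - phi n j : ℤ) : ℝ)| = ((|phi n i - phi n j| : ℤ) : ℝ) := by
          rw [Int.cast_abs]
      _ ≤ ((|i - j| : ℤ) : ℝ) := by exact_mod_cast h2
      _ = t := by rw [ht, Int.cast_abs]
  have hAij := hC i j
  rw [norm_mul, norm_pow]
  have hts : ‖(((phi n i : ℤ) : ℂ) - ((phi n j : ℤ) : ℂ))‖ ^ k ≤ t ^ k :=
    pow_le_pow_left₀ (norm_nonneg _) hphi k
  have hrpow : (1 + t) ^ (-((k:ℝ) + 2)) = ((1 + t) ^ k)⁻¹ * ((1 + t) ^ (2:ℕ))⁻¹ := by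
    rw [Real.rpow_neg (le_of_lt h1t), Real.rpow_add h1t, Real.rpow_natCast,
      show ((2:ℝ)) = ((2:ℕ):ℝ) by norm_num, Real.rpow_natCast]
    rw [mul_inv]
  have htk : t ^ k ≤ (1 + t) ^ k := pow_le_pow_left₀ ht0 (by linarith) k
  have hpk : (0:ℝ) < (1 + t) ^ k := pow_pos h1t k
  calc ‖(((phi n i : ℤ) : ℂ) - ((phi n j : ℤ) : ℂ))‖ ^ k * ‖matrixEntry A i j‖
      ≤ t ^ k * (C * (1 + t) ^ (-((k:ℝ) + 2))) := by
        apply mul_le_mul hts hAij (norm_nonneg _) (by positivity)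
    _ = (t ^ k * ((1 + t) ^ k)⁻¹) * (C * ((1 + t) ^ (2:ℕ))⁻¹) := by
        rw [hrpow]; ring
    _ ≤ 1 * (C * ((1 + t) ^ (2:ℕ))⁻¹) := by
        apply mul_le_mul_of_nonneg_right
        · rw [← div_eq_mul_inv, div_le_one hpk]; exact htk
        · have : (0:ℝ) < 1 + t := h1t
          positivity
    _ = w (i - j) := by rw [one_mul, hw, ht]

lemma cmt_inverse (n : ℕ) (A B : l2Z →L[ℂ] l2Z) (hAB : A * B = 1) (hBA : B * A = 1) :
    cmt n B = -(B * (cmt n A * B)) := by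
  have h1 : B * (cmt n A * B) = B * Dop n * (A * B) - (B * A) * (Dop n * B) := by
    simp only [cmt]; noncomm_ring
  rw [h1, hAB, hBA, one_mul, mul_one]
  simp only [cmt]
  noncomm_ring

lemma PB (A B : l2Z →L[ℂ] l2Z) (hA : RapidDecay A) (hAB : A * B = 1) (hBA : B * A = 1) :
    ∀ k : ℕ, ∀ j ≤ k, UB j (fun _ => B) := by
  intro k
  induction k with
  | zero =>
      intro j hj
      interval_cases j
      exact ⟨‖B‖, fun n => le_refl _⟩
  | succ k ih =>
      intro j hj
      rcases Nat.lt_or_ge j (k+1) with h | h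
      · exact ih j (by omega)
      · have hj' : j = k + 1 := by omega
        subst hj'
        -- inner family : cmt n A * B
        have hP1 : ∀ j ≤ k, UB j (fun n => cmt n A * B) := by
          intro j hj
          apply Qmul j (fun n => cmt n A) (fun _ => B)
          · intro j' hj'
            obtain ⟨M, hM⟩ := PA A hA (j'+1)
            exact ⟨M, fun n => by
              have := hM n
              rwa [itcmt_succ'] at this⟩
          · intro j' hj'
            exact ih j' (by omega)
        have hP2 : UB k (fun n => B * (cmt n A * B)) := by
          apply Qmul k (fun _ => B) (fun n => cmt n A * B)
          · intro j' hj'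
            exact ih j' (by omega)
          · exact fun j' hj' => hP1 j' hj'
        obtain ⟨M, hM⟩ := hP2
        refine ⟨M, fun n => ?_⟩
        have hrw : itcmt n (k+1) B = -(itcmt n k (B * (cmt n A * B))) := by
          rw [itcmt_succ', cmt_inverse n A B hAB hBA, itcmt_neg]
        rw [hrw, norm_neg]
        exact hM n

/-- if a bounded operator `A` on `ℓ²(ℤ)` has rapidly decaying matrix
entries and is invertible in the algebra of bounded operators, then its inverse also
has rapidly decaying matrix entries (spectral invariance of the algebra `𝒮`). -/
theorem inverse_has_rapidly_decaying_entries
    (A B : l2Z →L[ℂ] l2Z) (hA : RapidDecay A)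
    (hAB : A ∘L B = 1) (hBA : B ∘L A = 1) :
    RapidDecay B := by
  have hAB' : A * B = 1 := hAB
  have hBA' : B * A = 1 := hBA
  intro N hN
  set k : ℕ := ⌈N⌉₊ with hk
  have hNk : N ≤ (k:ℝ) := Nat.le_ceil N
  obtain ⟨M, hM0, hM⟩ := UB_nonneg (PB A B hA hAB' hBA' k k le_rfl)
  refine ⟨(M + ‖B‖ + 1) * 2 ^ k, by positivity, ?_⟩
  intro i j
  set t : ℝ := |((i - j : ℤ) : ℝ)| with ht
  have ht0 : 0 ≤ t := abs_nonneg _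
  have h1t : (0:ℝ) < 1 + t := by positivity
  have h1t1 : (1:ℝ) ≤ 1 + t := by linarith
  -- entry bound from the commutator at a large n
  set n : ℕ := (|i| ⊔ |j|).toNat with hn
  have hin : |i| ≤ (n:ℤ) := by
    rw [hn]; rw [Int.toNat_of_nonneg (le_trans (abs_nonneg i) (le_max_left _ _))]
    exact le_max_left _ _
  have hjn : |j| ≤ (n:ℤ) := by
    rw [hn]; rw [Int.toNat_of_nonneg (le_trans (abs_nonneg i) (le_max_left _ _))]
    exact le_max_right _ _
  have hent := itcmt_entry n k B i j
  rw [phi_eq n i hin, phi_eq n j hjn] at hent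
  have hkey : t ^ k * ‖matrixEntry B i j‖ ≤ M := by
    have h1 : ‖matrixEntry (itcmt n k B) i j‖ ≤ M := by
      calc ‖matrixEntry (itcmt n k B) i j‖ ≤ ‖itcmt n k B‖ := entry_norm_le _ i j
        _ ≤ M := hM n
    rw [hent, norm_mul, norm_pow] at h1
    have : ‖((i:ℂ)) - ((j:ℂ))‖ = t := by
      have hc : ((i:ℂ)) - ((j:ℂ)) = (((i - j : ℤ)) : ℂ) := by push_cast; ring
      rw [hc, Complex.norm_intCast, ht]
    rwa [this] at h1
  have hBnorm : ‖matrixEntry B i j‖ ≤ ‖B‖ := entry_norm_le B i j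
  -- final computation
  rw [Real.rpow_neg (le_of_lt h1t), ← div_eq_mul_inv,
    le_div_iff₀ (Real.rpow_pos_of_pos h1t N)]
  have h2 : (1+t) ^ N ≤ (1+t) ^ ((k:ℝ)) := Real.rpow_le_rpow_of_exponent_le h1t1 hNk
  have h3 : (1+t) ^ ((k:ℝ)) = (1+t) ^ k := Real.rpow_natCast _ k
  have hstep : ‖matrixEntry B i j‖ * (1+t) ^ N ≤ ‖matrixEntry B i j‖ * (1+t) ^ k := by
    rw [← h3]
    exact mul_le_mul_of_nonneg_left h2 (norm_nonneg _)
  have h2pow : (1:ℝ) ≤ 2 ^ k := one_le_pow₀ (by norm_num)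
  have hcases : t = 0 ∨ 1 ≤ t := by
    rcases eq_or_ne i j with h | h
    · left; rw [ht, h]; simp
    · right
      rw [ht]
      have : (1:ℤ) ≤ |i - j| := Int.one_le_abs (sub_ne_zero.2 h)
      calc (1:ℝ) = ((1:ℤ):ℝ) := by norm_num
        _ ≤ ((|i - j|:ℤ):ℝ) := by exact_mod_cast this
        _ = |((i - j : ℤ):ℝ)| := by rw [Int.cast_abs]
  rcases hcases with h | h
  · have : (1 + t) ^ k = 1 := by rw [h]; norm_num
    rw [this, mul_one] at hstep
    have haux : (M + ‖B‖ + 1) * 1 ≤ (M + ‖B‖ + 1) * 2 ^ k := by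
      apply mul_le_mul_of_nonneg_left h2pow
      positivity
    linarith
  · have h4 : (1+t) ^ k ≤ 2 ^ k * t ^ k := by
      calc (1+t) ^ k ≤ (2*t) ^ k := pow_le_pow_left₀ (by positivity) (by linarith) k
        _ = 2 ^ k * t ^ k := mul_pow 2 t k
    have h5 : ‖matrixEntry B i j‖ * (1+t) ^ k ≤ 2 ^ k * (t ^ k * ‖matrixEntry B i j‖) := by
      calc ‖matrixEntry B i j‖ * (1+t) ^ k ≤ ‖matrixEntry B i j‖ * (2 ^ k * t ^ k) :=
            mul_le_mul_of_nonneg_left h4 (norm_nonneg _)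
        _ = 2 ^ k * (t ^ k * ‖matrixEntry B i j‖) := by ring
    have h6 : (2:ℝ) ^ k * (t ^ k * ‖matrixEntry B i j‖) ≤ 2 ^ k * M :=
      mul_le_mul_of_nonneg_left hkey (by positivity)
    have h7 : (2:ℝ) ^ k * M ≤ (M + ‖B‖ + 1) * 2 ^ k := by
      rw [mul_comm ((2:ℝ)^k) M]
      apply mul_le_mul_of_nonneg_right _ (by positivity)
      linarith [norm_nonneg B]
    linarith
end
end

section
/- Let m ∈ ℝ, R ≥ 1, C > 0, and let a be a bounded linear operator on ℓ²(ℤ) such that for all u ∈ ℓ²(ℤ), ∑_{n∈ℤ} |(a u)(n)|²·(n² + R²)^{−m} ≤ C²·∑_{n∈ℤ} |u(n)|². Then for every k ∈ ℤ the diagonal matrix entry satisfies |⟪e_k, a e_k⟫| ≤ C·(k² + R²)^{m/2}. -/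
noncomputable section

/-- if `a` is bounded with norm at most `C` from `ℓ²(ℤ)` to the weighted
space with weight `μ_{-m,R}(n) = (n²+R²)^{-m}` (an operator of order `m`), then its
diagonal matrix entries satisfy `|⟪e_k, a e_k⟫| ≤ C (k²+R²)^{m/2}`. -/
theorem diagonal_entry_estimate_of_order_m
    (m R C : ℝ) (hR : 1 ≤ R) (hC : 0 < C) (a : l2Z →L[ℂ] l2Z)
    (h : ∀ u : l2Z,
      Summable (fun n : ℤ => ‖(a u) n‖ ^ 2 * ((n : ℝ) ^ 2 + R ^ 2) ^ (-m)) ∧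
      ∑' n : ℤ, ‖(a u) n‖ ^ 2 * ((n : ℝ) ^ 2 + R ^ 2) ^ (-m) ≤
        C ^ 2 * ∑' n : ℤ, ‖u n‖ ^ 2) :
    ∀ k : ℤ, ‖matrixEntry a k k‖ ≤ C * ((k : ℝ) ^ 2 + R ^ 2) ^ (m / 2) := by
  intro k
  have hbase : (0:ℝ) < (k : ℝ) ^ 2 + R ^ 2 := by positivity
  -- matrix entry is the k-th coordinate of a (e k)
  have hentry : matrixEntry a k k = (a (e k)) k := by
    rw [matrixEntry, e, lp.inner_single_left]
    simp
  -- sum of squares of e k is 1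
  have hek : ∑' n : ℤ, ‖(e k) n‖ ^ 2 = 1 := by
    have : ∀ n : ℤ, ‖(e k) n‖ ^ 2 = if n = k then (1:ℝ) else 0 := by
      intro n
      by_cases hn : n = k
      · subst hn; simp [e, lp.single_apply_self]
      · simp [e, lp.single_apply_ne 2 k _ hn, hn]
    simp only [this]
    exact tsum_ite_eq k 1
  obtain ⟨hsum, hle⟩ := h (e k)
  have hterm : ‖(a (e k)) k‖ ^ 2 * ((k : ℝ) ^ 2 + R ^ 2) ^ (-m) ≤ C ^ 2 := by
    calc ‖(a (e k)) k‖ ^ 2 * ((k : ℝ) ^ 2 + R ^ 2) ^ (-m)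
        ≤ ∑' n : ℤ, ‖(a (e k)) n‖ ^ 2 * ((n : ℝ) ^ 2 + R ^ 2) ^ (-m) := by
          refine Summable.le_tsum hsum k fun n _ => ?_
          have : (0:ℝ) < (n : ℝ) ^ 2 + R ^ 2 := by positivity
          positivity
      _ ≤ C ^ 2 * ∑' n : ℤ, ‖(e k) n‖ ^ 2 := hle
      _ = C ^ 2 := by rw [hek, mul_one]
  have hsq : ‖(a (e k)) k‖ ^ 2 ≤ C ^ 2 * ((k : ℝ) ^ 2 + R ^ 2) ^ m := by
    have hmul : ((k : ℝ) ^ 2 + R ^ 2) ^ (-m) * ((k : ℝ) ^ 2 + R ^ 2) ^ m = 1 := by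
      rw [← Real.rpow_add hbase]; simp
    have hpm : (0:ℝ) < ((k : ℝ) ^ 2 + R ^ 2) ^ m := Real.rpow_pos_of_pos hbase _
    nlinarith [hterm, hmul, hpm]
  rw [hentry]
  have hrhs : (0:ℝ) ≤ C * ((k : ℝ) ^ 2 + R ^ 2) ^ (m / 2) := by
    have := Real.rpow_pos_of_pos hbase (m/2); positivity
  have : (C * ((k : ℝ) ^ 2 + R ^ 2) ^ (m / 2)) ^ 2 = C ^ 2 * ((k : ℝ) ^ 2 + R ^ 2) ^ m := by
    rw [mul_pow, ← Real.rpow_natCast (((k : ℝ) ^ 2 + R ^ 2) ^ (m / 2)) 2,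
      ← Real.rpow_mul hbase.le]
    norm_num
  nlinarith [norm_nonneg ((a (e k)) k), hrhs, hsq, this]
end
end

section
/- Let m < −1 be a real number and let (a(R))_{R≥1} be a family of bounded linear operators on ℓ²(ℤ) for which there exists C > 0 such that for all R ≥ 1 and all u ∈ ℓ²(ℤ), ∑_{n∈ℤ} |(a(R) u)(n)|²·(n² + R²)^{−m} ≤ C²·∑_{n∈ℤ} |u(n)|². Then there exists C' > 0 such that for all R ≥ 1, ∑_{k∈ℤ} |⟪e_k, a(R) e_k⟫| ≤ C'·R^{m+1}. In particular the diagonal of a(R) is absolutely summable and the trace of a(R) is O(R^{m+1}) as R → ∞. -/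
noncomputable section

open Real in
private lemma step_ineq (m : ℝ) (hm : m < -1) (b : ℝ) (hb : 1 ≤ b) :
    b ^ m ≤ (2 ^ (-m) / (-(m+1))) * (b ^ (m+1) - (b+1) ^ (m+1)) := by
  set q : ℝ := -(m+1) with hqdef
  have hq : 0 < q := by simp [hqdef]; linarith
  have hb0 : (0:ℝ) < b := by linarith
  have hbb : (0:ℝ) < b + 1 := by linarith
  set B : ℝ := b ^ q with hBdef
  set B1 : ℝ := (b+1) ^ q with hB1def
  have hB : 0 < B := rpow_pos_of_pos hb0 q
  have hB1 : 0 < B1 := rpow_pos_of_pos hbb q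
  have e2 : b ^ (q+1) = B * b := by rw [rpow_add hb0, rpow_one]
  have e3 : (b+1) ^ (q+1) = B1 * (b+1) := by rw [rpow_add hbb, rpow_one]
  -- Bernoulli
  have hber : 1 + (q+1) * (1/b) ≤ (1 + 1/b) ^ (q+1) :=
    one_add_mul_self_le_rpow_one_add (by have h0 := one_div_nonneg.mpr hb0.le; linarith) (by linarith)
  have h1 : B * b + (q+1) * B ≤ B1 * (b+1) := by
    have h2 := mul_le_mul_of_nonneg_right hber (by positivity : (0:ℝ) ≤ b ^ (q+1))
    rw [← mul_rpow (by positivity) hb0.le] at h2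
    have e1 : (1 + 1/b) * b = b + 1 := by field_simp
    rw [e1, e3] at h2
    calc B * b + (q+1) * B = (1 + (q+1) * (1/b)) * b ^ (q+1) := by
          rw [e2]; field_simp
      _ ≤ B1 * (b+1) := h2
  have h2' : B1 * (b+1) ≤ 2 ^ q * 2 * (B * b) := by
    have := rpow_le_rpow hbb.le (by linarith : b + 1 ≤ 2 * b) (by linarith : (0:ℝ) ≤ q + 1)
    rw [e3, mul_rpow (by norm_num) hb0.le, e2, rpow_add (by norm_num : (0:ℝ) < 2), rpow_one] at this
    linarith
  have hBle : B ≤ B1 := rpow_le_rpow hb0.le (by linarith) hq.le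
  -- rewrite goal
  have hm1 : m = -(q+1) := by rw [hqdef]; ring
  have hm2 : m + 1 = -q := by rw [hqdef]; ring
  have g1 : b ^ m = (B * b)⁻¹ := by rw [hm1, rpow_neg hb0.le, e2]
  have g2 : (2:ℝ) ^ (-m) = 2 ^ q * 2 := by
    rw [hm1, neg_neg, rpow_add (by norm_num : (0:ℝ) < 2), rpow_one]
  have g3 : b ^ (m+1) = B⁻¹ := by rw [hm2, rpow_neg hb0.le]
  have g4 : (b+1) ^ (m+1) = B1⁻¹ := by rw [hm2, rpow_neg hbb.le]
  rw [g1, g2, g3, g4]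
  have hdiff : B⁻¹ - B1⁻¹ = (B1 - B) / (B * B1) := by field_simp
  rw [hdiff, hqdef] at *
  rw [inv_eq_one_div, div_mul_div_comm, div_le_div_iff₀ (by positivity) (by positivity)]
  nlinarith [mul_le_mul_of_nonneg_right h2' (sub_nonneg.2 hBle),
    mul_le_mul_of_nonneg_left h1 hB1.le, hB.le, hb0.le]

open Real in
private lemma nat_key (m : ℝ) (hm : m < -1) (R : ℝ) (hR : 1 ≤ R) :
    Summable (fun n : ℕ => ((n:ℝ) + R) ^ m) ∧
    ∑' n : ℕ, ((n:ℝ) + R) ^ m ≤ (2 ^ (-m) / (-(m+1))) * R ^ (m+1) := by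
  set c : ℝ := 2 ^ (-m) / (-(m+1)) with hcdef
  have hc : 0 ≤ c := by
    apply div_nonneg (rpow_nonneg (by norm_num) _); linarith
  set f : ℕ → ℝ := fun n => ((n:ℝ) + R) ^ (m+1) with hfdef
  have hpart : ∀ n : ℕ, ∑ i ∈ Finset.range n, ((i:ℝ) + R) ^ m ≤ c * R ^ (m+1) := by
    intro n
    have hstep : ∀ i : ℕ, ((i:ℝ) + R) ^ m ≤ c * (f i - f (i+1)) := by
      intro i
      have hb : 1 ≤ (i:ℝ) + R := by
        have : (0:ℝ) ≤ (i:ℝ) := Nat.cast_nonneg i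
        linarith
      have := step_ineq m hm ((i:ℝ) + R) hb
      have hcast : ((i:ℝ) + R + 1) = ((i+1 : ℕ):ℝ) + R := by push_cast; ring
      rw [hcast] at this
      exact this
    calc ∑ i ∈ Finset.range n, ((i:ℝ) + R) ^ m
        ≤ ∑ i ∈ Finset.range n, c * (f i - f (i+1)) := Finset.sum_le_sum fun i _ => hstep i
      _ = c * (f 0 - f n) := by rw [← Finset.mul_sum, Finset.sum_range_sub' f n]
      _ ≤ c * R ^ (m+1) := by
          have h0 : f 0 = R ^ (m+1) := by simp [hfdef]
          have hn : 0 ≤ f n := rpow_nonneg (by positivity) _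
          have : f 0 - f n ≤ R ^ (m+1) := by rw [h0]; linarith
          exact mul_le_mul_of_nonneg_left this hc
  have hnonneg : ∀ n : ℕ, 0 ≤ ((n:ℝ) + R) ^ m := fun n => rpow_nonneg (by positivity) _
  exact ⟨summable_of_sum_range_le hnonneg hpart, tsum_le_of_sum_range_le hnonneg hpart⟩

lemma sum_int_natAbs_le (g : ℕ → ℝ) (hg : ∀ n, 0 ≤ g n) (hsum : Summable g) (s : Finset ℤ) :
    ∑ k ∈ s, g k.natAbs ≤ 2 * ∑' n, g n := by
  classical
  have key : ∀ t : Finset ℤ, (∀ x ∈ t, ∀ y ∈ t, x.natAbs = y.natAbs → x = y) →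
      ∑ k ∈ t, g k.natAbs ≤ ∑' n, g n := by
    intro t ht
    rw [← Finset.sum_image (s := t) (g := Int.natAbs) (f := g) ht]
    exact Summable.sum_le_tsum _ (fun n _ => hg n) hsum
  have hsplit := Finset.filter_union_filter_not_eq (fun k : ℤ => 0 ≤ k) s
  rw [← hsplit, Finset.sum_union (Finset.disjoint_filter_filter_not s s _)]
  have h1 := key (s.filter (fun k => 0 ≤ k)) (by
    intro x hx y hy hxy
    simp only [Finset.mem_filter] at hx hy
    omega)
  have h2 := key (s.filter (fun k => ¬ 0 ≤ k)) (by
    intro x hx y hy hxy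
    simp only [Finset.mem_filter] at hx hy
    omega)
  linarith

open Real in
/-- trace estimate, Lemma 4 item 1: if `(a(R))_{R ≥ 1}` is a family of
operators of order `m < -1`, i.e. uniformly bounded from `ℓ²(ℤ)` into the weighted
space with weight `μ_{-m,R}(n) = (n²+R²)^{-m}`, then the diagonal of `a(R)` is
absolutely summable and `∑_k |⟪e_k, a(R) e_k⟫| ≤ C' R^{m+1}`, so `tr a(R) = O(R^{m+1})`. -/
theorem trace_estimate_of_order_m
    (m : ℝ) (hm : m < -1) (a : ℝ → (l2Z →L[ℂ] l2Z)) (C : ℝ) (hC : 0 < C)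
    (h : ∀ R : ℝ, 1 ≤ R → ∀ u : l2Z,
      Summable (fun n : ℤ => ‖(a R u) n‖ ^ 2 * ((n : ℝ) ^ 2 + R ^ 2) ^ (-m)) ∧
      ∑' n : ℤ, ‖(a R u) n‖ ^ 2 * ((n : ℝ) ^ 2 + R ^ 2) ^ (-m) ≤
        C ^ 2 * ∑' n : ℤ, ‖u n‖ ^ 2) :
    ∃ C' : ℝ, 0 < C' ∧ ∀ R : ℝ, 1 ≤ R →
      Summable (fun k : ℤ => ‖matrixEntry (a R) k k‖) ∧
      ∑' k : ℤ, ‖matrixEntry (a R) k k‖ ≤ C' * R ^ (m + 1) := by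
  classical
  set D : ℝ := C * 2 ^ (-(m/2)) with hDdef
  set c : ℝ := 2 ^ (-m) / (-(m+1)) with hcdef
  have hmn : (0:ℝ) < -(m+1) := by linarith
  have hcpos : 0 < c := div_pos (rpow_pos_of_pos (by norm_num) _) hmn
  have hDpos : 0 < D := mul_pos hC (rpow_pos_of_pos (by norm_num) _)
  refine ⟨2 * D * c, by positivity, fun R hR => ?_⟩
  have hR0 : (0:ℝ) < R := by linarith
  set g : ℕ → ℝ := fun n => ((n:ℝ) + R) ^ m with hgdef
  have hgnn : ∀ n, 0 ≤ g n := fun n => rpow_nonneg (by positivity) _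
  obtain ⟨hgsum, hgbound⟩ := nat_key m hm R hR
  -- pointwise bound
  have hpt : ∀ k : ℤ, ‖matrixEntry (a R) k k‖ ≤ D * g k.natAbs := by
    intro k
    obtain ⟨hs, hb⟩ := h R hR (e k)
    have hE : ∑' n : ℤ, ‖(e k) n‖ ^ 2 = 1 := by
      rw [tsum_eq_single k]
      · simp [e, lp.single_apply_self]
      · intro n hn
        simp [e, lp.single_apply_ne 2 k _ hn, Pi.single_apply, hn]
    rw [hE, mul_one] at hb
    set t : ℝ := ((k:ℝ)) ^ 2 + R ^ 2 with htdef
    have ht : 0 < t := by positivity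
    have hterm : ‖(a R (e k)) k‖ ^ 2 * t ^ (-m) ≤ C ^ 2 :=
      le_trans (Summable.le_tsum hs k fun n _ => by positivity) hb
    have hME : matrixEntry (a R) k k = (a R (e k)) k := by
      simp [matrixEntry, e, lp.inner_single_left]
    have htm : 0 < t ^ m := rpow_pos_of_pos ht m
    have h6 : ‖(a R (e k)) k‖ ^ 2 ≤ C ^ 2 * t ^ m := by
      rw [rpow_neg ht.le, ← div_eq_mul_inv, div_le_iff₀ htm] at hterm
      exact hterm
    have h7 : ‖(a R (e k)) k‖ ≤ C * t ^ (m/2) := by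
      have h8 : (C * t ^ (m/2)) ^ 2 = C ^ 2 * t ^ m := by
        rw [mul_pow, ← rpow_natCast (t ^ (m/2)) 2, ← rpow_mul ht.le]
        norm_num
      refine le_of_pow_le_pow_left₀ two_ne_zero (by positivity) ?_
      rw [h8]; exact h6
    set A : ℝ := (k.natAbs : ℝ) + R with hAdef
    have hApos : 0 < A := by positivity
    have hA2 : A ^ 2 / 2 ≤ t := by
      have habs : ((k.natAbs : ℝ)) ^ 2 = ((k:ℝ)) ^ 2 := by
        rw [Nat.cast_natAbs, Int.cast_abs, sq_abs]
      rw [htdef, ← habs, hAdef]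
      nlinarith [sq_nonneg ((k.natAbs : ℝ) - R)]
    have h9 : t ^ (m/2) ≤ (A ^ 2 / 2) ^ (m/2) :=
      rpow_le_rpow_of_nonpos (by positivity) hA2 (by linarith)
    have h10 : (A ^ 2 / 2) ^ (m/2) = 2 ^ (-(m/2)) * A ^ m := by
      rw [div_rpow (by positivity) (by norm_num), ← rpow_natCast A 2, ← rpow_mul hApos.le,
        show ((2:ℕ):ℝ) * (m/2) = m by push_cast; ring, div_eq_mul_inv,
        ← rpow_neg (by norm_num : (0:ℝ) ≤ 2), mul_comm]
    rw [hME]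
    calc ‖(a R (e k)) k‖ ≤ C * t ^ (m/2) := h7
      _ ≤ C * (2 ^ (-(m/2)) * A ^ m) := by
          rw [← h10]; exact mul_le_mul_of_nonneg_left h9 hC.le
      _ = D * g k.natAbs := by rw [hDdef, hgdef]; ring
  -- assemble
  have hZsum : Summable (fun k : ℤ => g k.natAbs) :=
    summable_of_sum_le (fun k => hgnn _) (fun s => sum_int_natAbs_le g hgnn hgsum s)
  have hZbound : ∑' k : ℤ, g k.natAbs ≤ 2 * ∑' n, g n :=
    Summable.tsum_le_of_sum_le hZsum (fun s => sum_int_natAbs_le g hgnn hgsum s)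
  have hsum1 : Summable (fun k : ℤ => ‖matrixEntry (a R) k k‖) :=
    Summable.of_nonneg_of_le (fun k => norm_nonneg _) hpt (hZsum.mul_left D)
  refine ⟨hsum1, ?_⟩
  calc ∑' k : ℤ, ‖matrixEntry (a R) k k‖ ≤ ∑' k : ℤ, D * g k.natAbs :=
        Summable.tsum_le_tsum hpt hsum1 (hZsum.mul_left D)
    _ = D * ∑' k : ℤ, g k.natAbs := tsum_mul_left
    _ ≤ D * (2 * ∑' n, g n) := mul_le_mul_of_nonneg_left hZbound hDpos.le
    _ ≤ D * (2 * (c * R ^ (m+1))) := by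
        have := mul_le_mul_of_nonneg_left hgbound (by norm_num : (0:ℝ) ≤ 2)
        exact mul_le_mul_of_nonneg_left this hDpos.le
    _ = 2 * D * c * R ^ (m+1) := by ring
end
end

section
/- Let A be a bounded linear operator on ℓ²(ℤ) with rapidly decaying matrix entries. Then for every s ∈ ℝ there exists a constant C_s > 0 such that for all real R ≥ 1 and all u ∈ ℓ²(ℤ) with ∑_{n∈ℤ} |u(n)|²·(n² + R²)^s < ∞, one has ∑_{n∈ℤ} |(A u)(n)|²·(n² + R²)^s ≤ C_s·∑_{n∈ℤ} |u(n)|²·(n² + R²)^s. That is, A is bounded on each weighted space ℓ²(ℤ, μ_{s,R}) with operator norm bounded uniformly in R ≥ 1 (A is an 'operator family of order 0' in the sense of the paper). -/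
noncomputable section

open scoped ENNReal NNReal ComplexConjugate
open MeasureTheory

namespace RDaux

lemma enn_half_sq (X : ℝ≥0∞) : (X ^ (1/2 : ℝ)) ^ 2 = X := by
  rw [← ENNReal.rpow_two, ← ENNReal.rpow_mul]
  norm_num

/-- Cauchy–Schwarz for `ℝ≥0∞`-valued sums over `ℤ`. -/
lemma enn_cs (f g : ℤ → ℝ≥0∞) :
    (∑' j, f j * g j) ^ 2 ≤ (∑' j, f j ^ 2) * (∑' j, g j ^ 2) := by
  have hpq : Real.HolderConjugate 2 2 := Real.HolderConjugate.two_two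
  have h := ENNReal.lintegral_mul_le_Lp_mul_Lq (Measure.count : Measure ℤ) hpq
    (measurable_of_countable f).aemeasurable (measurable_of_countable g).aemeasurable
  simp only [Pi.mul_apply, lintegral_count, ENNReal.rpow_two] at h
  calc (∑' j, f j * g j) ^ 2
      ≤ ((∑' j, f j ^ 2) ^ (1/(2:ℝ)) * (∑' j, g j ^ 2) ^ (1/(2:ℝ))) ^ 2 :=
        pow_le_pow_left₀ (zero_le) h 2
    _ = (∑' j, f j ^ 2) * (∑' j, g j ^ 2) := by
        rw [mul_pow, enn_half_sq, enn_half_sq]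

lemma peetre_base {R x y : ℝ} (hR : 1 ≤ R) :
    x ^ 2 + R ^ 2 ≤ (1 + |x - y|) ^ 2 * (y ^ 2 + R ^ 2) := by
  have h1 : x - y ≤ |x - y| := le_abs_self _
  have h2 : -(x - y) ≤ |x - y| := neg_le_abs _
  have h3 : (0:ℝ) ≤ |x - y| := abs_nonneg _
  have h4 : |x - y| ^ 2 = (x - y) ^ 2 := sq_abs _
  have hR2 : (1:ℝ) ≤ R ^ 2 := by nlinarith
  nlinarith [mul_nonneg h3 (sq_nonneg (y - 1)), mul_nonneg h3 (sq_nonneg (y + 1)),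
    sq_nonneg (x - y), mul_nonneg (mul_nonneg h3 h3) (sq_nonneg y)]

/-- Peetre-type inequality for the weights `(x²+R²)^s`, `R ≥ 1`. -/
lemma peetre_rpow {R : ℝ} (hR : 1 ≤ R) (s x y : ℝ) :
    (x ^ 2 + R ^ 2) ^ s ≤ (1 + |x - y|) ^ (2 * |s|) * ((y ^ 2 + R ^ 2) ^ s) := by
  have hd0 : (0:ℝ) ≤ 1 + |x - y| := by positivity
  have hx : (0:ℝ) < x ^ 2 + R ^ 2 := by nlinarith
  have hy : (0:ℝ) < y ^ 2 + R ^ 2 := by nlinarith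
  have hT : (1 + |x - y|) ^ (2 * |s|) = ((1 + |x - y|) ^ 2) ^ |s| := by
    rw [show (2:ℝ) * |s| = ((2:ℕ):ℝ) * |s| by norm_num, Real.rpow_natCast_mul hd0]
  rcases le_or_gt 0 s with hs | hs
  · rw [hT, abs_of_nonneg hs]
    calc (x ^ 2 + R ^ 2) ^ s ≤ ((1 + |x - y|) ^ 2 * (y ^ 2 + R ^ 2)) ^ s :=
          Real.rpow_le_rpow hx.le (peetre_base hR) hs
      _ = ((1 + |x - y|) ^ 2) ^ s * (y ^ 2 + R ^ 2) ^ s :=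
          Real.mul_rpow (by positivity) hy.le
  · rw [hT, abs_of_neg hs]
    have base : y ^ 2 + R ^ 2 ≤ (1 + |x - y|) ^ 2 * (x ^ 2 + R ^ 2) := by
      have := peetre_base (x := y) (y := x) hR
      rwa [abs_sub_comm y x] at this
    have hTpos : (0:ℝ) < (1 + |x - y|) ^ 2 := by positivity
    have h2 : ((1 + |x - y|) ^ 2 * (x ^ 2 + R ^ 2)) ^ s ≤ (y ^ 2 + R ^ 2) ^ s :=
      Real.rpow_le_rpow_of_nonpos hy base hs.le
    rw [Real.mul_rpow hTpos.le hx.le] at h2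
    have h3 := mul_le_mul_of_nonneg_left h2
      (le_of_lt (Real.rpow_pos_of_pos hTpos (-s)))
    rwa [← mul_assoc, ← Real.rpow_add hTpos, neg_add_cancel, Real.rpow_zero, one_mul] at h3

lemma kappa_summable : Summable (fun k : ℤ => (1 + |(k : ℝ)|) ^ (-2 : ℝ)) := by
  have h0 : Summable (fun n : ℕ => 1 / ((n:ℝ)) ^ 2) :=
    Real.summable_one_div_nat_pow.2 one_lt_two
  have h1 : Summable (fun n : ℕ => (1 + (n : ℝ)) ^ (-2 : ℝ)) := by
    refine ((summable_nat_add_iff 1).2 h0).congr fun n => ?_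
    rw [Real.rpow_neg (by positivity), Real.rpow_two]
    push_cast
    rw [one_div, add_comm]
  refine Summable.of_nat_of_neg (h1.congr fun n => ?_) (h1.congr fun n => ?_) <;>
    simp [abs_of_nonneg]

lemma inner_e_left (f : l2Z) (m : ℤ) : @inner ℂ _ _ (e m) f = f m := by
  classical
  rw [e, lp.inner_single_left]
  simp [RCLike.inner_apply]

/-- The pointwise matrix expansion of `A u`. -/
lemma hasSum_apply (A : l2Z →L[ℂ] l2Z) (u : l2Z) (n : ℤ) :
    HasSum (fun j => matrixEntry A n j * u j) ((A u) n) := by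
  classical
  set w : l2Z := ContinuousLinearMap.adjoint A (e n) with hw
  have h2 : ∀ j : ℤ, (starRingEnd ℂ) (w j) = matrixEntry A n j := by
    intro j
    rw [← inner_e_left w j, hw, ContinuousLinearMap.adjoint_inner_right]
    rw [← inner_conj_symm]
    simp [matrixEntry]
  have h3 : @inner ℂ _ _ w u = (A u) n := by
    rw [hw, ContinuousLinearMap.adjoint_inner_left, inner_e_left]
  have h4 := lp.hasSum_inner (𝕜 := ℂ) w u
  rw [h3] at h4
  refine h4.congr_fun fun j => ?_
  rw [RCLike.inner_apply, h2, mul_comm]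

end RDaux

open RDaux

/-- an operator `A` on `ℓ²(ℤ)` with rapidly decaying matrix entries is,
for every `s ∈ ℝ`, bounded on the weighted space `ℓ²(ℤ, μ_{s,R})`,
`μ_{s,R}(n) = (n²+R²)^s`, with operator norm bounded uniformly in `R ≥ 1`
(`A` is an operator family of order `0`). -/
theorem rapid_decay_bounded_on_weighted_l2
    (A : l2Z →L[ℂ] l2Z) (hA : RapidDecay A) (s : ℝ) :
    ∃ C : ℝ, 0 < C ∧ ∀ R : ℝ, 1 ≤ R → ∀ u : l2Z,
      Summable (fun n : ℤ => ‖u n‖ ^ 2 * ((n : ℝ) ^ 2 + R ^ 2) ^ s) →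
      Summable (fun n : ℤ => ‖(A u) n‖ ^ 2 * ((n : ℝ) ^ 2 + R ^ 2) ^ s) ∧
      ∑' n : ℤ, ‖(A u) n‖ ^ 2 * ((n : ℝ) ^ 2 + R ^ 2) ^ s ≤
        C * ∑' n : ℤ, ‖u n‖ ^ 2 * ((n : ℝ) ^ 2 + R ^ 2) ^ s := by
  classical
  obtain ⟨B, hB, hbound⟩ := hA (2 * |s| + 2) (by positivity)
  set φ : ℤ → ℝ≥0∞ := fun k => ENNReal.ofReal ((1 + |(k:ℝ)|) ^ (-2:ℝ)) with hφ
  set κ : ℝ≥0∞ := ∑' k : ℤ, φ k with hκ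
  have hκ_ne_top : κ ≠ ⊤ := by
    rw [hκ, hφ, ← ENNReal.ofReal_tsum_of_nonneg
      (fun k => Real.rpow_nonneg (by positivity) _) kappa_summable]
    exact ENNReal.ofReal_ne_top
  set C' : ℝ≥0∞ := (ENNReal.ofReal B * κ) ^ 2 with hC'
  have hC'_ne_top : C' ≠ ⊤ := by
    rw [hC']
    exact ENNReal.pow_ne_top (ENNReal.mul_ne_top ENNReal.ofReal_ne_top hκ_ne_top)
  refine ⟨max C'.toReal 1, lt_of_lt_of_le one_pos (le_max_right _ _), ?_⟩
  intro R hR u hu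
  have hR0 : (0:ℝ) < R := lt_of_lt_of_le one_pos hR
  set w : ℤ → ℝ := fun n => ((n:ℝ) ^ 2 + R ^ 2) ^ s with hwdef
  have hw_pos : ∀ n : ℤ, 0 < w n := fun n => by
    rw [hwdef]
    exact Real.rpow_pos_of_pos (add_pos_of_nonneg_of_pos (sq_nonneg _) (pow_pos hR0 2)) s
  have hu' : Summable (fun n : ℤ => ‖u n‖ ^ 2 * w n) := by
    simp only [hwdef]; exact hu
  set W : ℤ → ℝ≥0∞ := fun n => ENNReal.ofReal (w n) with hWdef
  have hone : ∀ n j : ℤ, (1:ℝ) ≤ 1 + |((n - j : ℤ):ℝ)| :=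
    fun n j => le_add_of_nonneg_right (abs_nonneg _)
  -- rows: decay alone
  have hrow : ∀ n j : ℤ, (‖matrixEntry A n j‖₊ : ℝ≥0∞) ≤ ENNReal.ofReal B * φ (n - j) := by
    intro n j
    have hr : ‖matrixEntry A n j‖ ≤ B * (1 + |((n - j : ℤ):ℝ)|) ^ (-2:ℝ) := by
      refine (hbound n j).trans ?_
      refine mul_le_mul_of_nonneg_left ?_ hB.le
      exact Real.rpow_le_rpow_of_exponent_le (hone n j) (by nlinarith [abs_nonneg s])
    rw [← enorm_eq_nnnorm, ← ofReal_norm]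
    simp only [hφ]
    rw [← ENNReal.ofReal_mul hB.le]
    exact ENNReal.ofReal_le_ofReal hr
  -- columns: decay combined with the Peetre inequality
  have hcol : ∀ n j : ℤ, (‖matrixEntry A n j‖₊ : ℝ≥0∞) * W n ≤
      ENNReal.ofReal B * φ (n - j) * W j := by
    intro n j
    have hd1 : (1:ℝ) ≤ 1 + |((n - j : ℤ):ℝ)| := hone n j
    have hd0 : (0:ℝ) < 1 + |((n - j : ℤ):ℝ)| := lt_of_lt_of_le one_pos hd1
    have hcast : ((n - j : ℤ):ℝ) = (n:ℝ) - (j:ℝ) := by push_cast; ring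
    have hp : w n ≤ (1 + |((n - j : ℤ):ℝ)|) ^ (2 * |s|) * w j := by
      have := peetre_rpow hR s (n:ℝ) (j:ℝ)
      rw [hwdef, hcast]
      simpa using this
    have hreal : ‖matrixEntry A n j‖ * w n ≤
        B * (1 + |((n - j : ℤ):ℝ)|) ^ (-2:ℝ) * w j := by
      calc ‖matrixEntry A n j‖ * w n
          ≤ (B * (1 + |((n - j : ℤ):ℝ)|) ^ (-(2 * |s| + 2))) *
            ((1 + |((n - j : ℤ):ℝ)|) ^ (2 * |s|) * w j) := by
            refine mul_le_mul (hbound n j) hp (hw_pos n).le ?_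
            exact mul_nonneg hB.le (Real.rpow_nonneg hd0.le _)
        _ = B * ((1 + |((n - j : ℤ):ℝ)|) ^ (-(2 * |s| + 2)) *
            (1 + |((n - j : ℤ):ℝ)|) ^ (2 * |s|)) * w j := by ring
        _ = B * (1 + |((n - j : ℤ):ℝ)|) ^ (-2:ℝ) * w j := by
            rw [← Real.rpow_add hd0, show -(2 * |s| + 2) + 2 * |s| = (-2:ℝ) by ring]
    rw [← enorm_eq_nnnorm, ← ofReal_norm]
    simp only [hφ, hWdef]
    rw [← ENNReal.ofReal_mul (norm_nonneg _), ← ENNReal.ofReal_mul hB.le,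
      ← ENNReal.ofReal_mul (mul_nonneg hB.le (Real.rpow_nonneg hd0.le _))]
    exact ENNReal.ofReal_le_ofReal hreal
  have hφsum : ∀ n : ℤ, (∑' j : ℤ, φ (n - j)) = κ := by
    intro n
    rw [hκ]
    simpa using (Equiv.subLeft n).tsum_eq φ
  have hφsum' : ∀ j : ℤ, (∑' n : ℤ, φ (n - j)) = κ := by
    intro j
    rw [hκ]
    simpa using (Equiv.subRight j).tsum_eq φ
  have hrowsum : ∀ n : ℤ, (∑' j : ℤ, (‖matrixEntry A n j‖₊ : ℝ≥0∞)) ≤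
      ENNReal.ofReal B * κ := by
    intro n
    calc (∑' j : ℤ, (‖matrixEntry A n j‖₊ : ℝ≥0∞))
        ≤ ∑' j : ℤ, ENNReal.ofReal B * φ (n - j) := ENNReal.tsum_le_tsum (hrow n)
      _ = ENNReal.ofReal B * ∑' j : ℤ, φ (n - j) := ENNReal.tsum_mul_left
      _ = ENNReal.ofReal B * κ := by rw [hφsum n]
  have hcolsum : ∀ j : ℤ, (∑' n : ℤ, (‖matrixEntry A n j‖₊ : ℝ≥0∞) * W n) ≤
      ENNReal.ofReal B * κ * W j := by
    intro j
    calc (∑' n : ℤ, (‖matrixEntry A n j‖₊ : ℝ≥0∞) * W n)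
        ≤ ∑' n : ℤ, ENNReal.ofReal B * W j * φ (n - j) := by
          refine ENNReal.tsum_le_tsum fun n => ?_
          calc (‖matrixEntry A n j‖₊ : ℝ≥0∞) * W n
              ≤ ENNReal.ofReal B * φ (n - j) * W j := hcol n j
            _ = ENNReal.ofReal B * W j * φ (n - j) := by ring
      _ = ENNReal.ofReal B * W j * ∑' n : ℤ, φ (n - j) := ENNReal.tsum_mul_left
      _ = ENNReal.ofReal B * κ * W j := by rw [hφsum' j]; ring
  -- pointwise bound on `(A u) n`
  have hAu : ∀ n : ℤ, (‖(A u) n‖₊ : ℝ≥0∞) ≤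
      ∑' j : ℤ, (‖matrixEntry A n j‖₊ : ℝ≥0∞) * (‖u j‖₊ : ℝ≥0∞) := by
    intro n
    have hhs := hasSum_apply A u n
    by_cases hfin : (∑' j : ℤ, (‖matrixEntry A n j‖₊ : ℝ≥0∞) * (‖u j‖₊ : ℝ≥0∞)) = ⊤
    · exact hfin ▸ le_top
    · have h1 : ∀ j : ℤ, (‖matrixEntry A n j‖₊ : ℝ≥0∞) * (‖u j‖₊ : ℝ≥0∞) =
          ((‖matrixEntry A n j * u j‖₊ : ℝ≥0) : ℝ≥0∞) := by
        intro j; rw [nnnorm_mul, ENNReal.coe_mul]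
      have hfin' : (∑' j : ℤ, ((‖matrixEntry A n j * u j‖₊ : ℝ≥0) : ℝ≥0∞)) ≠ ⊤ := by
        simpa only [h1] using hfin
      have hsummable : Summable fun j : ℤ => ‖matrixEntry A n j * u j‖₊ :=
        ENNReal.tsum_coe_ne_top_iff_summable.mp hfin'
      have hsum_norm : Summable fun j : ℤ => ‖matrixEntry A n j * u j‖ :=
        (NNReal.summable_coe.2 hsummable).congr fun j => coe_nnnorm _
      calc (‖(A u) n‖₊ : ℝ≥0∞) = ENNReal.ofReal ‖(A u) n‖ :=
          (ofReal_norm _).symm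
        _ ≤ ENNReal.ofReal (∑' j : ℤ, ‖matrixEntry A n j * u j‖) := by
            refine ENNReal.ofReal_le_ofReal ?_
            rw [← hhs.tsum_eq]
            exact norm_tsum_le_tsum_norm hsum_norm
        _ = ∑' j : ℤ, ENNReal.ofReal ‖matrixEntry A n j * u j‖ :=
            ENNReal.ofReal_tsum_of_nonneg (fun _ => norm_nonneg _) hsum_norm
        _ = ∑' j : ℤ, (‖matrixEntry A n j‖₊ : ℝ≥0∞) * (‖u j‖₊ : ℝ≥0∞) := by
            refine tsum_congr fun j => ?_
            rw [ofReal_norm, h1 j, enorm_eq_nnnorm]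
  -- Cauchy–Schwarz step
  have hCS : ∀ n : ℤ, (∑' j : ℤ, (‖matrixEntry A n j‖₊ : ℝ≥0∞) * (‖u j‖₊ : ℝ≥0∞)) ^ 2 ≤
      (ENNReal.ofReal B * κ) * ∑' j : ℤ, (‖matrixEntry A n j‖₊ : ℝ≥0∞) * (‖u j‖₊ : ℝ≥0∞) ^ 2 := by
    intro n
    have h := enn_cs (fun j => (‖matrixEntry A n j‖₊ : ℝ≥0∞) ^ (1/2:ℝ))
      (fun j => (‖matrixEntry A n j‖₊ : ℝ≥0∞) ^ (1/2:ℝ) * (‖u j‖₊ : ℝ≥0∞))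
    have e1 : ∀ j : ℤ, ((‖matrixEntry A n j‖₊ : ℝ≥0∞) ^ (1/2:ℝ)) *
        ((‖matrixEntry A n j‖₊ : ℝ≥0∞) ^ (1/2:ℝ) * (‖u j‖₊ : ℝ≥0∞)) =
        (‖matrixEntry A n j‖₊ : ℝ≥0∞) * (‖u j‖₊ : ℝ≥0∞) := by
      intro j
      rw [← mul_assoc, ← ENNReal.rpow_add_of_nonneg _ _ (by norm_num) (by norm_num),
        show (1/2:ℝ) + 1/2 = 1 by norm_num, ENNReal.rpow_one]
    have e2 : ∀ j : ℤ, (((‖matrixEntry A n j‖₊ : ℝ≥0∞)) ^ (1/2:ℝ)) ^ 2 =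
        (‖matrixEntry A n j‖₊ : ℝ≥0∞) := fun j => enn_half_sq _
    have e3 : ∀ j : ℤ, ((‖matrixEntry A n j‖₊ : ℝ≥0∞) ^ (1/2:ℝ) * (‖u j‖₊ : ℝ≥0∞)) ^ 2 =
        (‖matrixEntry A n j‖₊ : ℝ≥0∞) * (‖u j‖₊ : ℝ≥0∞) ^ 2 := by
      intro j; rw [mul_pow, enn_half_sq]
    simp only [e1, e2, e3] at h
    exact h.trans (mul_le_mul' (hrowsum n) le_rfl)
  -- the main estimate in `ℝ≥0∞`
  set F : ℝ≥0∞ := ∑' n : ℤ, (‖(A u) n‖₊ : ℝ≥0∞) ^ 2 * W n with hF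
  set G : ℝ≥0∞ := ∑' n : ℤ, (‖u n‖₊ : ℝ≥0∞) ^ 2 * W n with hG
  have hmain : F ≤ C' * G := by
    rw [hF, hG, hC']
    calc (∑' n : ℤ, (‖(A u) n‖₊ : ℝ≥0∞) ^ 2 * W n)
        ≤ ∑' n : ℤ, (∑' j : ℤ, (‖matrixEntry A n j‖₊ : ℝ≥0∞) * (‖u j‖₊ : ℝ≥0∞)) ^ 2 * W n :=
          ENNReal.tsum_le_tsum fun n =>
            mul_le_mul_left (pow_le_pow_left₀ (zero_le) (hAu n) 2) _
      _ ≤ ∑' n : ℤ, ((ENNReal.ofReal B * κ) *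
            ∑' j : ℤ, (‖matrixEntry A n j‖₊ : ℝ≥0∞) * (‖u j‖₊ : ℝ≥0∞) ^ 2) * W n :=
          ENNReal.tsum_le_tsum fun n => mul_le_mul_left (hCS n) _
      _ = ∑' n : ℤ, (ENNReal.ofReal B * κ) * ∑' j : ℤ,
            ((‖matrixEntry A n j‖₊ : ℝ≥0∞) * W n) * (‖u j‖₊ : ℝ≥0∞) ^ 2 := by
          refine tsum_congr fun n => ?_
          rw [mul_assoc]
          congr 1
          rw [← ENNReal.tsum_mul_right]
          exact tsum_congr fun j => by ring
      _ = (ENNReal.ofReal B * κ) * ∑' n : ℤ, ∑' j : ℤ,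
            ((‖matrixEntry A n j‖₊ : ℝ≥0∞) * W n) * (‖u j‖₊ : ℝ≥0∞) ^ 2 :=
          ENNReal.tsum_mul_left
      _ = (ENNReal.ofReal B * κ) * ∑' j : ℤ, (‖u j‖₊ : ℝ≥0∞) ^ 2 *
            ∑' n : ℤ, (‖matrixEntry A n j‖₊ : ℝ≥0∞) * W n := by
          congr 1
          rw [ENNReal.tsum_comm]
          refine tsum_congr fun j => ?_
          rw [ENNReal.tsum_mul_right, mul_comm]
      _ ≤ (ENNReal.ofReal B * κ) * ∑' j : ℤ, (‖u j‖₊ : ℝ≥0∞) ^ 2 *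
            (ENNReal.ofReal B * κ * W j) :=
          mul_le_mul' le_rfl (ENNReal.tsum_le_tsum fun j => mul_le_mul' le_rfl (hcolsum j))
      _ = ∑' j : ℤ, (ENNReal.ofReal B * κ) *
            ((‖u j‖₊ : ℝ≥0∞) ^ 2 * (ENNReal.ofReal B * κ * W j)) :=
          ENNReal.tsum_mul_left.symm
      _ = ∑' j : ℤ, (ENNReal.ofReal B * κ) ^ 2 * ((‖u j‖₊ : ℝ≥0∞) ^ 2 * W j) :=
          tsum_congr fun j => by ring
      _ = (ENNReal.ofReal B * κ) ^ 2 * ∑' n : ℤ, (‖u n‖₊ : ℝ≥0∞) ^ 2 * W n := by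
          rw [ENNReal.tsum_mul_left]
  -- transfer back to `ℝ`
  have hterm : ∀ (z : ℂ) (n : ℤ), (‖z‖₊ : ℝ≥0∞) ^ 2 * W n = ENNReal.ofReal (‖z‖ ^ 2 * w n) := by
    intro z n
    simp only [hWdef]
    rw [← enorm_eq_nnnorm, ← ofReal_norm, ← ENNReal.ofReal_pow (norm_nonneg _),
      ← ENNReal.ofReal_mul (by positivity)]
  have hnn : ∀ (v : l2Z) (n : ℤ), 0 ≤ ‖v n‖ ^ 2 * w n :=
    fun v n => mul_nonneg (pow_nonneg (norm_nonneg _) 2) (hw_pos n).le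
  have hG_eq : G = ENNReal.ofReal (∑' n : ℤ, ‖u n‖ ^ 2 * w n) := by
    rw [hG, ENNReal.ofReal_tsum_of_nonneg (hnn u) hu']
    exact tsum_congr fun n => hterm (u n) n
  have hCG_ne_top : C' * G ≠ ⊤ :=
    ENNReal.mul_ne_top hC'_ne_top (hG_eq ▸ ENNReal.ofReal_ne_top)
  have hF_ne_top : F ≠ ⊤ := (lt_of_le_of_lt hmain hCG_ne_top.lt_top).ne
  have hf_sum : Summable (fun n : ℤ => ‖(A u) n‖ ^ 2 * w n) := by
    have hF2 : (∑' n : ℤ, ENNReal.ofReal (‖(A u) n‖ ^ 2 * w n)) ≠ ⊤ := by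
      rw [← tsum_congr (fun n => hterm ((A u) n) n)]
      exact hF_ne_top
    refine (ENNReal.summable_toReal hF2).congr fun n => ?_
    rw [ENNReal.toReal_ofReal (hnn (A u) n)]
  have hF_eq : F = ENNReal.ofReal (∑' n : ℤ, ‖(A u) n‖ ^ 2 * w n) := by
    rw [hF, ENNReal.ofReal_tsum_of_nonneg (hnn (A u)) hf_sum]
    exact tsum_congr fun n => hterm ((A u) n) n
  have hle : (∑' n : ℤ, ‖(A u) n‖ ^ 2 * w n) ≤
      C'.toReal * (∑' n : ℤ, ‖u n‖ ^ 2 * w n) := by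
    have h1 := ENNReal.toReal_mono hCG_ne_top hmain
    rw [hF_eq, ENNReal.toReal_ofReal (tsum_nonneg (hnn (A u)))] at h1
    rw [ENNReal.toReal_mul, hG_eq, ENNReal.toReal_ofReal (tsum_nonneg (hnn u))] at h1
    exact h1
  have hfinal : (∑' n : ℤ, ‖(A u) n‖ ^ 2 * w n) ≤
      max C'.toReal 1 * (∑' n : ℤ, ‖u n‖ ^ 2 * w n) :=
    hle.trans (mul_le_mul_of_nonneg_right (le_max_left _ _) (tsum_nonneg (hnn u)))
  constructor
  · simpa only [hwdef] using hf_sum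
  · simpa only [hwdef] using hfinal
end
end
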